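/- arXiv:1508.01688 — 4 statements merged into one kernel-verified Lean document; each statement's English description precedes it below -/
import Mathlib

section
/- For n ≥ 1 and r ≥ 1, the number of plane trees with n+1 nodes, of which exactly r are internal (degree ≥ 1), equals the Narayana number N(n,r) = (1/n)·C(n,r)·C(n,r-1). -/
/-- `d` is the multi-degree sequence of a plane tree with `n+1` nodes:
`d_0 + ⋯ + d_n = n` and `d_0 + ⋯ + d_{i-1} ≥ i` for all `i ∈ {1,…,n}`
(entries beyond index `n` vanish). -/
def IsTreeDeg (n : ℕ) (d : ℕ → ℕ) : Prop :=
  (∀ i, n < i → d i = 0) ∧ (∑ i ∈ Finset.range (n + 1), d i = n) ∧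
    (∀ i, 1 ≤ i → i ≤ n → i ≤ ∑ j ∈ Finset.range i, d j)

namespace Nara

/-- cyclic shift by `k` (reading indices mod `n+1`), truncated outside `range (n+1)`. -/
def sh (n k : ℕ) (d : ℕ → ℕ) : ℕ → ℕ := fun i => if i < n + 1 then d ((i + k) % (n + 1)) else 0

/-- partial sums of the periodic extension of `d`. -/
def S (n : ℕ) (d : ℕ → ℕ) (i : ℕ) : ℕ := ∑ j ∈ Finset.range i, d (j % (n + 1))

/-- height function. -/
def H (n : ℕ) (d : ℕ → ℕ) (i : ℕ) : ℤ := (S n d i : ℤ) - i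

lemma S_succ (n : ℕ) (d : ℕ → ℕ) (i : ℕ) : S n d (i + 1) = S n d i + d (i % (n + 1)) :=
  Finset.sum_range_succ _ _

lemma S_eq (n : ℕ) (d : ℕ → ℕ) {i : ℕ} (hi : i ≤ n + 1) :
    S n d i = ∑ j ∈ Finset.range i, d j := by
  refine Finset.sum_congr rfl fun j hj => ?_
  rw [Nat.mod_eq_of_lt]
  exact lt_of_lt_of_le (Finset.mem_range.mp hj) hi

lemma S_period (n : ℕ) (d : ℕ → ℕ) (hsum : ∑ i ∈ Finset.range (n + 1), d i = n) (i : ℕ) :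
    S n d (i + (n + 1)) = S n d i + n := by
  induction i with
  | zero =>
      have := S_eq n d (le_refl (n+1))
      simp only [Nat.zero_add, S, Finset.range_zero, Finset.sum_empty] at *
      rw [this, hsum]
  | succ i ih =>
      have h1 : i + 1 + (n + 1) = (i + (n + 1)) + 1 := by omega
      rw [h1, S_succ, ih, S_succ]
      have h2 : (i + (n + 1)) % (n + 1) = i % (n + 1) := Nat.add_mod_right i (n+1)
      rw [h2]; ring

lemma S_shift (n k : ℕ) (d : ℕ → ℕ) (i : ℕ) :
    S n (sh n k d) i + S n d k = S n d (k + i) := by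
  induction i with
  | zero => simp [S]
  | succ i ih =>
      have h1 : k + (i + 1) = (k + i) + 1 := by omega
      rw [h1, S_succ, S_succ, ← ih, sh]
      have h2 : i % (n + 1) < n + 1 := Nat.mod_lt _ (by omega)
      rw [if_pos h2, Nat.mod_add_mod]
      have h3 : (i + k) % (n + 1) = (k + i) % (n + 1) := by rw [Nat.add_comm]
      rw [h3]; ring

lemma H_period (n : ℕ) (d : ℕ → ℕ) (hsum : ∑ i ∈ Finset.range (n + 1), d i = n) (i : ℕ) :
    H n d (i + (n + 1)) = H n d i - 1 := by
  unfold H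
  rw [S_period n d hsum]
  push_cast
  ring

lemma H_shift (n k : ℕ) (d : ℕ → ℕ) (i : ℕ) :
    H n (sh n k d) i = H n d (k + i) - H n d k := by
  unfold H
  have := S_shift n k d i
  have h : (S n (sh n k d) i : ℤ) + S n d k = S n d (k + i) := by exact_mod_cast this
  push_cast
  omega



lemma sh_sh (n k k' : ℕ) (d : ℕ → ℕ) : sh n k' (sh n k d) = sh n (k' + k) d := by
  funext i
  unfold sh
  by_cases hi : i < n + 1
  · rw [if_pos hi, if_pos (Nat.mod_lt _ (by omega)), Nat.mod_add_mod, if_pos hi]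
    rw [Nat.add_assoc]
  · rw [if_neg hi, if_neg hi]

lemma sh_zero (n : ℕ) (d : ℕ → ℕ) (hd : ∀ i, n < i → d i = 0) : sh n 0 d = d := by
  funext i
  unfold sh
  by_cases hi : i < n + 1
  · rw [if_pos hi, Nat.add_zero, Nat.mod_eq_of_lt hi]
  · rw [if_neg hi, hd i (by omega)]

lemma sh_period (n k : ℕ) (d : ℕ → ℕ) : sh n (k + (n + 1)) d = sh n k d := by
  funext i
  unfold sh
  by_cases hi : i < n + 1
  · rw [if_pos hi, if_pos hi]
    congr 1
    have : i + (k + (n + 1)) = (i + k) + (n + 1) := by omega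
    rw [this, Nat.add_mod_right]
  · rw [if_neg hi, if_neg hi]



section FM
open Nara

variable (n : ℕ) (d : ℕ → ℕ)

lemma fm_ex : ∃ k, k < n + 1 ∧ ∀ j < n + 1, H n d k ≤ H n d j := by
  obtain ⟨k, hk, hmin⟩ := Finset.exists_min_image (Finset.range (n + 1)) (H n d)
    ⟨0, Finset.mem_range.mpr (by omega)⟩
  exact ⟨k, Finset.mem_range.mp hk, fun j hj => hmin j (Finset.mem_range.mpr hj)⟩

/-- the first index in `[0, n]` at which `H n d` attains its minimum. -/
def fm : ℕ := Nat.find (fm_ex n d)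

lemma fm_lt : fm n d < n + 1 := (Nat.find_spec (fm_ex n d)).1

lemma fm_min : ∀ j < n + 1, H n d (fm n d) ≤ H n d j := (Nat.find_spec (fm_ex n d)).2

lemma fm_first : ∀ j < fm n d, H n d (fm n d) < H n d j := by
  intro j hj
  have h := Nat.find_min (fm_ex n d) hj
  push_neg at h
  have hjm : j < n + 1 := lt_trans hj (fm_lt n d)
  obtain ⟨j', hj', hlt⟩ := h hjm
  exact lt_of_le_of_lt (fm_min n d j' hj') hlt

lemma fm_eq (k : ℕ) (hk : k < n + 1) (hmin : ∀ j < n + 1, H n d k ≤ H n d j)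
    (hfirst : ∀ j < k, ∃ j' < n + 1, H n d j' < H n d j) : fm n d = k := by
  rw [fm, Nat.find_eq_iff]
  refine ⟨⟨hk, hmin⟩, fun j hj => ?_⟩
  rintro ⟨hjm, hjmin⟩
  obtain ⟨j', hj', hlt⟩ := hfirst j hj
  exact absurd (hjmin j' hj') (not_le.mpr hlt)

end FM

end Nara
section Mod

lemma nara_mod_helper (m k i : ℕ) (hm : 0 < m) (hi : i < m) :
    ((i + k) % m + (m - k % m)) % m = i := by
  rw [Nat.mod_add_mod]
  have h2 := Nat.div_add_mod k m
  have h3 : k % m < m := Nat.mod_lt _ hm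
  have h1 : i + k + (m - k % m) = i + m * (k / m + 1) := by
    rw [Nat.mul_add, Nat.mul_one]
    omega
  rw [h1, Nat.add_mul_mod_self_left, Nat.mod_eq_of_lt hi]

lemma nara_mod_helper2 (m k j : ℕ) (hm : 0 < m) (hj : j < m) :
    ((j + (m - k % m)) % m + k) % m = j := by
  rw [Nat.mod_add_mod]
  have h2 := Nat.div_add_mod k m
  have h3 : k % m < m := Nat.mod_lt _ hm
  have h1 : j + (m - k % m) + k = j + m * (k / m + 1) := by
    rw [Nat.mul_add, Nat.mul_one]
    omega
  rw [h1, Nat.add_mul_mod_self_left, Nat.mod_eq_of_lt hj]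

end Mod

def Qp (n r : ℕ) (d : ℕ → ℕ) : Prop :=
  (∀ i, n < i → d i = 0) ∧ (∑ i ∈ Finset.range (n + 1), d i = n) ∧
    ((Finset.range (n + 1)).filter fun i => d i ≠ 0).card = r

section Transfer
open Nara

variable (n r k : ℕ) (d : ℕ → ℕ)

lemma sh_supp : ∀ i, n < i → sh n k d i = 0 := fun i hi => if_neg (by omega)

lemma sh_sum (hd : ∑ i ∈ Finset.range (n + 1), d i = n) :
    ∑ i ∈ Finset.range (n + 1), sh n k d i = n := by
  have h1 : ∑ i ∈ Finset.range (n + 1), sh n k d i = S n (sh n k d) (n + 1) :=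
    (S_eq n _ le_rfl).symm
  have h2 := S_shift n k d (n + 1)
  have h3 := S_period n d hd k
  have h4 : k + (n + 1) = k + (n + 1) := rfl
  omega

lemma sh_card :
    ((Finset.range (n + 1)).filter fun i => sh n k d i ≠ 0).card =
      ((Finset.range (n + 1)).filter fun i => d i ≠ 0).card := by
  apply Finset.card_nbij' (fun i => (i + k) % (n + 1))
      (fun j => (j + ((n + 1) - k % (n + 1))) % (n + 1))
  · intro a ha
    simp only [Finset.mem_coe, Finset.mem_filter, Finset.mem_range] at ha ⊢
    refine ⟨Nat.mod_lt _ (by omega), ?_⟩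
    have h5 := ha.2
    rwa [sh, if_pos ha.1] at h5
  · intro a ha
    simp only [Finset.mem_coe, Finset.mem_filter, Finset.mem_range] at ha ⊢
    refine ⟨Nat.mod_lt _ (by omega), ?_⟩
    rw [sh, if_pos (Nat.mod_lt _ (by omega : 0 < n + 1)), Nat.mod_add_mod]
    have h6 := nara_mod_helper2 (n + 1) k a (by omega) ha.1
    rw [Nat.mod_add_mod] at h6
    rw [h6]
    exact ha.2
  · intro a ha
    simp only [Finset.mem_coe, Finset.mem_filter, Finset.mem_range] at ha
    exact nara_mod_helper (n + 1) k a (by omega) ha.1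
  · intro a ha
    simp only [Finset.mem_coe, Finset.mem_filter, Finset.mem_range] at ha
    exact nara_mod_helper2 (n + 1) k a (by omega) ha.1

lemma Qp_sh (h : Qp n r d) : Qp n r (sh n k d) :=
  ⟨sh_supp n k d, sh_sum n k d h.2.1, (sh_card n k d).trans h.2.2⟩

end Transfer

section Cycle
open Nara

variable (n r : ℕ)

lemma H_zero (e : ℕ → ℕ) : H n e 0 = 0 := by simp [H, S]

lemma H_nonneg (e : ℕ → ℕ) (he : IsTreeDeg n e) : ∀ i < n + 1, 0 ≤ H n e i := by
  intro i hi
  rcases Nat.eq_zero_or_pos i with h0 | h1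
  · subst h0; simp [H, S]
  · have hb := he.2.2 i h1 (by omega)
    have hs : S n e i = ∑ j ∈ Finset.range i, e j := S_eq n e (by omega)
    unfold H
    rw [hs]
    exact sub_nonneg.mpr (by exact_mod_cast hb)

lemma H_m (e : ℕ → ℕ) (he : IsTreeDeg n e) : H n e (n + 1) = -1 := by
  have h := H_period n e he.2.1 0
  rw [Nat.zero_add] at h
  rw [h, H_zero]
  norm_num

lemma H_low (e : ℕ → ℕ) (he : IsTreeDeg n e) : ∀ i < 2 * (n + 1), -1 ≤ H n e i := by
  intro i hi
  rcases lt_or_ge i (n + 1) with h | h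
  · linarith [H_nonneg n e he i h]
  · have heq : i = (i - (n + 1)) + (n + 1) := by omega
    rw [heq, H_period n e he.2.1]
    have := H_nonneg n e he (i - (n + 1)) (by omega)
    omega

lemma ballot_sh (d : ℕ → ℕ) (hQ : Qp n r d) : IsTreeDeg n (sh n (fm n d) d) := by
  refine ⟨sh_supp _ _ _, sh_sum _ _ _ hQ.2.1, ?_⟩
  intro i h1 h2
  set k := fm n d with hk
  have hkm := fm_lt n d
  have hHe : H n (sh n k d) i = H n d (k + i) - H n d k := H_shift n k d i
  have key : 0 ≤ H n (sh n k d) i := by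
    rw [hHe]
    rcases lt_or_ge (k + i) (n + 1) with h | h
    · have h7 := fm_min n d (k + i) h
      rw [← hk] at h7
      omega
    · have hj : k + i - (n + 1) < k := by omega
      have heq : k + i = (k + i - (n + 1)) + (n + 1) := by omega
      rw [heq, H_period n d hQ.2.1]
      have h8 := fm_first n d _ hj
      rw [← hk] at h8
      omega
  have hs : S n (sh n k d) i = ∑ j ∈ Finset.range i, sh n k d j := S_eq n _ (by omega)
  unfold H at key
  rw [hs] at key
  exact_mod_cast sub_nonneg.mp key

lemma fm_shift_back (e : ℕ → ℕ) (he : IsTreeDeg n e) (k : ℕ) (hk : k < n + 1) :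
    fm n (sh n ((n + 1 - k) % (n + 1)) e) = k := by
  set t := (n + 1 - k) % (n + 1) with ht
  have hHd : ∀ x, H n (sh n t e) x = H n e (t + x) - H n e t := H_shift n t e
  have htlt : t < n + 1 := Nat.mod_lt _ (by omega)
  apply fm_eq
  · exact hk
  · intro j hj
    rw [hHd k, hHd j]
    rcases Nat.eq_zero_or_pos k with h0 | hpos
    · subst h0
      have ht0 : t = 0 := by rw [ht, Nat.sub_zero, Nat.mod_self]
      rw [ht0]
      simp only [Nat.zero_add]
      have := H_nonneg n e he j hj
      have h00 := H_zero n e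
      omega
    · have ht1 : t = n + 1 - k := by rw [ht]; exact Nat.mod_eq_of_lt (by omega)
      have htk : t + k = n + 1 := by omega
      rw [htk]
      have hm := H_m n e he
      have := H_low n e he (t + j) (by omega)
      omega
  · intro j hj
    refine ⟨k, hk, ?_⟩
    rw [hHd k, hHd j]
    have hpos : 0 < k := by omega
    have ht1 : t = n + 1 - k := by rw [ht]; exact Nat.mod_eq_of_lt (by omega)
    have htk : t + k = n + 1 := by omega
    rw [htk]
    have hm := H_m n e he
    have := H_nonneg n e he (t + j) (by omega)
    omega

lemma sh_back (e : ℕ → ℕ) (he0 : ∀ i, n < i → e i = 0) (k : ℕ) (hk : k < n + 1) :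
    sh n k (sh n ((n + 1 - k) % (n + 1)) e) = e := by
  rw [sh_sh]
  rcases Nat.eq_zero_or_pos k with h0 | hpos
  · subst h0
    rw [Nat.sub_zero, Nat.mod_self, Nat.add_zero]
    exact sh_zero n e he0
  · rw [Nat.mod_eq_of_lt (by omega : n + 1 - k < n + 1)]
    have heq : k + (n + 1 - k) = 0 + (n + 1) := by omega
    rw [heq, sh_period, sh_zero n e he0]

lemma sh_forth (d : ℕ → ℕ) (hd0 : ∀ i, n < i → d i = 0) (k : ℕ) (hk : k < n + 1) :
    sh n ((n + 1 - k) % (n + 1)) (sh n k d) = d := by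
  rw [sh_sh]
  rcases Nat.eq_zero_or_pos k with h0 | hpos
  · subst h0
    rw [Nat.sub_zero, Nat.mod_self, Nat.zero_add]
    exact sh_zero n d hd0
  · rw [Nat.mod_eq_of_lt (by omega : n + 1 - k < n + 1)]
    have heq : n + 1 - k + k = 0 + (n + 1) := by omega
    rw [heq, sh_period, sh_zero n d hd0]

end Cycle

section Count
open Nara

lemma count_comps (r k : ℕ) :
    Nat.card {g : Fin r → ℕ // ∑ j, g j = k} = Nat.multichoose r k := by
  rw [Nat.card_congr (Sym.equivNatSumOfFintype (Fin r) k).symm, Nat.card_eq_fintype_card,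
    Sym.card_sym_eq_multichoose, Fintype.card_fin]

/-- the cycle-lemma bijection: a tree degree sequence with a marked rotation,
sent to the rotated sequence. -/
noncomputable def Psi2 (n r : ℕ)
    (p : {d : ℕ → ℕ // IsTreeDeg n d ∧
        ((Finset.range (n + 1)).filter fun i => d i ≠ 0).card = r} × Fin (n + 1)) :
    {d : ℕ → ℕ // Qp n r d} :=
  ⟨sh n ((n + 1 - (p.2 : ℕ)) % (n + 1)) p.1.1,
    Qp_sh n r _ _ ⟨p.1.2.1.1, p.1.2.1.2.1, p.1.2.2⟩⟩

lemma Psi2_bijective (n r : ℕ) : Function.Bijective (Psi2 n r) := by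
  constructor
  · rintro ⟨⟨e, he, hce⟩, k⟩ ⟨⟨e', he', hce'⟩, k'⟩ h
    have hval : sh n ((n + 1 - (k : ℕ)) % (n + 1)) e =
        sh n ((n + 1 - (k' : ℕ)) % (n + 1)) e' := congrArg Subtype.val h
    have hk : fm n (sh n ((n + 1 - (k : ℕ)) % (n + 1)) e) = (k : ℕ) :=
      fm_shift_back n e he (k : ℕ) k.2
    have hk' : fm n (sh n ((n + 1 - (k' : ℕ)) % (n + 1)) e') = (k' : ℕ) :=
      fm_shift_back n e' he' (k' : ℕ) k'.2
    have hkk : (k : ℕ) = (k' : ℕ) := by rw [← hk, ← hk', hval]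
    have hee : e = e' := by
      have h1 : sh n (k : ℕ) (sh n ((n + 1 - (k : ℕ)) % (n + 1)) e) = e :=
        sh_back n e he.1 (k : ℕ) k.2
      have h2 : sh n (k' : ℕ) (sh n ((n + 1 - (k' : ℕ)) % (n + 1)) e') = e' :=
        sh_back n e' he'.1 (k' : ℕ) k'.2
      rw [← h1, ← h2, hval, hkk]
    refine Prod.ext ?_ ?_
    · exact Subtype.ext hee
    · exact Fin.ext hkk
  · rintro ⟨d, hQ⟩
    refine ⟨(⟨sh n (fm n d) d, ballot_sh n r d hQ,
      (sh_card n (fm n d) d).trans hQ.2.2⟩, ⟨fm n d, fm_lt n d⟩), ?_⟩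
    exact Subtype.ext (sh_forth n d hQ.1 (fm n d) (fm_lt n d))

lemma cycle_count (n r : ℕ) :
    Nat.card {d : ℕ → ℕ // Qp n r d} =
      Nat.card {d : ℕ → ℕ // IsTreeDeg n d ∧
        ((Finset.range (n + 1)).filter fun i => d i ≠ 0).card = r} * (n + 1) := by
  rw [← Nat.card_eq_of_bijective _ (Psi2_bijective n r), Nat.card_prod]
  simp [Nat.card_eq_fintype_card]

end Count

section StarsBars
open Nara

/-- build a degree sequence from a support set and reduced values. -/
noncomputable def mkd (r : ℕ) (S : Finset ℕ) (hc : S.card = r) (g : Fin r → ℕ) : ℕ → ℕ :=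
  fun i => if h : i ∈ S then g ((S.orderIsoOfFin hc).symm ⟨i, h⟩) + 1 else 0

lemma mkd_filter (n r : ℕ) (S : Finset ℕ) (hc : S.card = r) (g : Fin r → ℕ)
    (hsub : S ⊆ Finset.range (n + 1)) :
    (Finset.range (n + 1)).filter (fun i => mkd r S hc g i ≠ 0) = S := by
  ext i
  simp only [Finset.mem_filter, Finset.mem_range]
  constructor
  · rintro ⟨-, h2⟩
    by_contra h
    rw [mkd, dif_neg h] at h2
    exact h2 rfl
  · intro h
    refine ⟨Finset.mem_range.mp (hsub h), ?_⟩
    rw [mkd, dif_pos h]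
    exact Nat.succ_ne_zero _

lemma mkd_apply_orderIso (r : ℕ) (S : Finset ℕ) (hc : S.card = r) (g : Fin r → ℕ) (j : Fin r) :
    mkd r S hc g ↑((S.orderIsoOfFin hc) j) = g j + 1 := by
  rw [mkd, dif_pos ((S.orderIsoOfFin hc) j).2, Subtype.coe_eta, OrderIso.symm_apply_apply]

lemma mkd_sum (n r : ℕ) (S : Finset ℕ) (hc : S.card = r) (g : Fin r → ℕ)
    (hsub : S ⊆ Finset.range (n + 1)) (hg : ∑ j, g j = n - r) (hrn : r ≤ n) :
    ∑ i ∈ Finset.range (n + 1), mkd r S hc g i = n := by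
  have hzero : ∀ x ∈ Finset.range (n + 1), x ∉ S → mkd r S hc g x = 0 := by
    intro x _ hx
    rw [mkd, dif_neg hx]
  rw [← Finset.sum_subset hsub hzero]
  rw [← Finset.sum_attach S (mkd r S hc g)]
  have h1 : ∀ x ∈ S.attach,
      mkd r S hc g ↑x = g ((S.orderIsoOfFin hc).symm x) + 1 := by
    intro x _
    rw [mkd, dif_pos x.2, Subtype.coe_eta]
  rw [Finset.sum_congr rfl h1, Finset.sum_add_distrib, Finset.sum_const, Finset.card_attach, hc,
    ← Finset.univ_eq_attach]
  have h2 : ∑ x : { x // x ∈ S }, g ((S.orderIsoOfFin hc).symm x) = ∑ j, g j :=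
    Fintype.sum_equiv ((S.orderIsoOfFin hc).symm.toEquiv) _ _ (fun x => rfl)
  rw [h2, hg, smul_eq_mul, mul_one]
  omega

lemma mkd_Qp (n r : ℕ) (S : Finset ℕ) (hc : S.card = r) (g : Fin r → ℕ)
    (hsub : S ⊆ Finset.range (n + 1)) (hg : ∑ j, g j = n - r) (hrn : r ≤ n) :
    Qp n r (mkd r S hc g) := by
  refine ⟨?_, mkd_sum n r S hc g hsub hg hrn, ?_⟩
  · intro i hi
    rw [mkd, dif_neg]
    intro h
    exact absurd (Finset.mem_range.mp (hsub h)) (by omega)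
  · rw [mkd_filter n r S hc g hsub, hc]

/-- the stars-and-bars bijection. -/
noncomputable def Psi1 (n r : ℕ) (hrn : r ≤ n)
    (p : {S : Finset ℕ // S ∈ Finset.powersetCard r (Finset.range (n + 1))} ×
      {g : Fin r → ℕ // ∑ j, g j = n - r}) : {d : ℕ → ℕ // Qp n r d} :=
  ⟨mkd r p.1.1 (Finset.mem_powersetCard.mp p.1.2).2 p.2.1,
    mkd_Qp n r _ _ _ (Finset.mem_powersetCard.mp p.1.2).1 p.2.2 hrn⟩

lemma Psi1_bijective (n r : ℕ) (hrn : r ≤ n) : Function.Bijective (Psi1 n r hrn) := by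
  constructor
  · rintro ⟨⟨S, hS⟩, ⟨g, hg⟩⟩ ⟨⟨S', hS'⟩, ⟨g', hg'⟩⟩ h
    have hval : mkd r S (Finset.mem_powersetCard.mp hS).2 g =
        mkd r S' (Finset.mem_powersetCard.mp hS').2 g' := congrArg Subtype.val h
    have hSS : S = S' := by
      rw [← mkd_filter n r S (Finset.mem_powersetCard.mp hS).2 g
            (Finset.mem_powersetCard.mp hS).1,
          ← mkd_filter n r S' (Finset.mem_powersetCard.mp hS').2 g'
            (Finset.mem_powersetCard.mp hS').1, hval]
    subst hSS
    have hgg : g = g' := by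
      funext j
      have h1 := mkd_apply_orderIso r S (Finset.mem_powersetCard.mp hS).2 g j
      have h2 : mkd r S (Finset.mem_powersetCard.mp hS').2 g'
          ↑((S.orderIsoOfFin (Finset.mem_powersetCard.mp hS).2) j) = g' j + 1 :=
        mkd_apply_orderIso r S (Finset.mem_powersetCard.mp hS').2 g' j
      rw [← hval] at h2
      omega
    refine Prod.ext (Subtype.ext rfl) (Subtype.ext hgg)
  · rintro ⟨d, hQ⟩
    set S := (Finset.range (n + 1)).filter (fun i => d i ≠ 0) with hSdef
    have hS : S ∈ Finset.powersetCard r (Finset.range (n + 1)) :=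
      Finset.mem_powersetCard.mpr ⟨Finset.filter_subset _ _, hQ.2.2⟩
    have hc : S.card = r := hQ.2.2
    set ι := S.orderIsoOfFin hc with hι
    have hpos : ∀ j : Fin r, d ↑(ι j) ≠ 0 := fun j => (Finset.mem_filter.mp (ι j).2).2
    have hg : ∑ j, (d ↑(ι j) - 1) = n - r := by
      have h1 : ∑ j, (d ↑(ι j) - 1) + ∑ _j : Fin r, 1 = ∑ j, d ↑(ι j) := by
        rw [← Finset.sum_add_distrib]
        refine Finset.sum_congr rfl fun j _ => ?_
        have := hpos j
        omega
      have h2 : ∑ j, d ↑(ι j) = ∑ i ∈ S, d i := by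
        rw [← Finset.sum_coe_sort S d]
        exact Fintype.sum_equiv ι.toEquiv _ _ (fun x => rfl)
      have h3 : ∑ i ∈ S, d i = n := by
        rw [hSdef, Finset.sum_filter_ne_zero]
        exact hQ.2.1
      have h4 : ∑ _j : Fin r, 1 = r := by simp
      omega
    refine ⟨⟨⟨S, hS⟩, ⟨fun j => d ↑(ι j) - 1, hg⟩⟩, ?_⟩
    apply Subtype.ext
    funext i
    show mkd r S (Finset.mem_powersetCard.mp hS).2 (fun j => d ↑(ι j) - 1) i = d i
    by_cases h : i ∈ S
    · have heval : mkd r S (Finset.mem_powersetCard.mp hS).2 (fun j => d ↑(ι j) - 1) i =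
          d ↑(ι ((S.orderIsoOfFin (Finset.mem_powersetCard.mp hS).2).symm ⟨i, h⟩)) - 1 + 1 := by
        rw [mkd, dif_pos h]
      rw [heval]
      have hii : (↑(ι ((S.orderIsoOfFin (Finset.mem_powersetCard.mp hS).2).symm ⟨i, h⟩)) : ℕ)
          = i := by
        rw [hι, OrderIso.apply_symm_apply]
      rw [hii]
      have : d i ≠ 0 := (Finset.mem_filter.mp h).2
      omega
    · rw [mkd, dif_neg h]
      rcases lt_or_ge i (n + 1) with hi | hi
      · by_contra hne
        exact h (Finset.mem_filter.mpr ⟨Finset.mem_range.mpr hi, fun hz => hne hz.symm⟩)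
      · exact (hQ.1 i (by omega)).symm

lemma comp_count (n r : ℕ) (hr : 1 ≤ r) (hrn : r ≤ n) :
    Nat.card {d : ℕ → ℕ // Qp n r d} = (n + 1).choose r * (n - 1).choose (r - 1) := by
  rw [← Nat.card_eq_of_bijective _ (Psi1_bijective n r hrn), Nat.card_prod]
  have h1 : Nat.card {S : Finset ℕ // S ∈ Finset.powersetCard r (Finset.range (n + 1))} =
      (n + 1).choose r := by
    rw [Nat.card_eq_fintype_card, Fintype.card_coe, Finset.card_powersetCard, Finset.card_range]
  have h2 : Nat.card {g : Fin r → ℕ // ∑ j, g j = n - r} = (n - 1).choose (r - 1) := by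
    rw [count_comps, Nat.multichoose_eq]
    have he : r + (n - r) - 1 = n - 1 := by omega
    rw [he]
    have he2 : n - r = (n - 1) - (r - 1) := by omega
    rw [he2, Nat.choose_symm (by omega)]
  rw [h1, h2]

end StarsBars


/-- The number of plane trees with `n+1` nodes and exactly `r` internal nodes is the
Narayana number `N(n,r) = (1/n)·C(n,r)·C(n,r-1)`. -/
theorem narayana_count (n r : ℕ) (hn : 1 ≤ n) (hr : 1 ≤ r) :
    n * Nat.card {d : ℕ → ℕ // IsTreeDeg n d ∧
        ((Finset.range (n + 1)).filter fun i => d i ≠ 0).card = r} =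
      n.choose r * n.choose (r - 1) := by
  rcases le_or_gt r n with hrn | hrn
  · obtain ⟨n', rfl⟩ : ∃ n', n = n' + 1 := ⟨n - 1, by omega⟩
    obtain ⟨r', rfl⟩ : ∃ r', r = r' + 1 := ⟨r - 1, by omega⟩
    have hQ := comp_count (n' + 1) (r' + 1) hr hrn
    rw [cycle_count (n' + 1) (r' + 1)] at hQ
    simp only [Nat.add_sub_cancel] at hQ ⊢
    generalize hN : Nat.card {d : ℕ → ℕ // IsTreeDeg (n' + 1) d ∧
        ((Finset.range (n' + 1 + 1)).filter fun i => d i ≠ 0).card = r' + 1} = N at hQ ⊢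
    have e1 : (n' + 1) * Nat.choose n' r' = Nat.choose (n' + 1) (r' + 1) * (r' + 1) :=
      Nat.add_one_mul_choose_eq n' r'
    have e2 : (n' + 1 + 1) * Nat.choose (n' + 1) r' =
        Nat.choose (n' + 1 + 1) (r' + 1) * (r' + 1) :=
      Nat.add_one_mul_choose_eq (n' + 1) r'
    have main : ((n' + 1) * N) * (n' + 1 + 1) =
        (Nat.choose (n' + 1) (r' + 1) * Nat.choose (n' + 1) r') * (n' + 1 + 1) := by
      calc ((n' + 1) * N) * (n' + 1 + 1)
          = (n' + 1) * (N * (n' + 1 + 1)) := by ring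
        _ = (n' + 1) * (Nat.choose (n' + 1 + 1) (r' + 1) * Nat.choose n' r') := by rw [hQ]
        _ = Nat.choose (n' + 1 + 1) (r' + 1) * ((n' + 1) * Nat.choose n' r') := by ring
        _ = Nat.choose (n' + 1 + 1) (r' + 1) *
              (Nat.choose (n' + 1) (r' + 1) * (r' + 1)) := by rw [e1]
        _ = Nat.choose (n' + 1) (r' + 1) *
              (Nat.choose (n' + 1 + 1) (r' + 1) * (r' + 1)) := by ring
        _ = Nat.choose (n' + 1) (r' + 1) * ((n' + 1 + 1) * Nat.choose (n' + 1) r') := by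
              rw [e2]
        _ = (Nat.choose (n' + 1) (r' + 1) * Nat.choose (n' + 1) r') * (n' + 1 + 1) := by ring
    exact Nat.eq_of_mul_eq_mul_right (Nat.succ_pos (n' + 1)) main
  · have hempty : IsEmpty {d : ℕ → ℕ // IsTreeDeg n d ∧
        ((Finset.range (n + 1)).filter fun i => d i ≠ 0).card = r} := by
      refine ⟨fun p => ?_⟩
      obtain ⟨d, hd, hcard⟩ := p
      have hle : ((Finset.range (n + 1)).filter fun i => d i ≠ 0).card ≤
          ∑ i ∈ Finset.range (n + 1), d i := by
        calc ((Finset.range (n + 1)).filter fun i => d i ≠ 0).card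
            = ∑ _i ∈ (Finset.range (n + 1)).filter fun i => d i ≠ 0, 1 := by
              rw [Finset.card_eq_sum_ones]
          _ ≤ ∑ i ∈ (Finset.range (n + 1)).filter fun i => d i ≠ 0, d i :=
              Finset.sum_le_sum fun i hi =>
                Nat.one_le_iff_ne_zero.mpr (Finset.mem_filter.mp hi).2
          _ = ∑ i ∈ Finset.range (n + 1), d i := Finset.sum_filter_ne_zero _
      rw [hd.2.1, hcard] at hle
      omega
    rw [Nat.card_of_isEmpty, Nat.choose_eq_zero_of_lt hrn]
    simp
end

section
/- For k ≥ 1, n ≥ 1, and r ≥ 1, the number of plane trees with n+1 nodes, exactly r internal nodes, and every non-root node of degree less than k+1 equals Σ_{0 ≤ j ≤ (n-r)/k} ((-1)^j / n)·C(n, r-1)·C(r-1, j)·C(n-jk, r). -/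
namespace RMC
open Finset

attribute [local instance] Classical.propDecidable

noncomputable section

/-- prefix sums -/
def ps (b : ℕ → ℕ) (t : ℕ) : ℕ := ∑ j ∈ range t, b j

/-- periodization -/
def per (n : ℕ) (b : ℕ → ℕ) (j : ℕ) : ℕ := b (j % n)

/-- rotation -/
def rot (n i : ℕ) (b : ℕ → ℕ) (j : ℕ) : ℕ := if j < n then b ((i + j) % n) else 0

/-- ballot/dominance property -/
def Good (n : ℕ) (b : ℕ → ℕ) : Prop := ∀ t, 1 ≤ t → t ≤ n → ps b t < t

def F (n : ℕ) (b : ℕ → ℕ) (t : ℕ) : ℤ := (ps (per n b) t : ℤ) - t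

def M (n : ℕ) (b : ℕ → ℕ) (i : ℕ) : ℤ :=
  (Icc i (i + n)).sup' (Finset.nonempty_Icc.mpr (Nat.le_add_right i n)) (F n b)

section Cycle

variable {n : ℕ} {b : ℕ → ℕ}

lemma add_mod_left' (i x : ℕ) : (i + x % n) % n = (i + x) % n := by
  conv_lhs => rw [Nat.add_mod]
  conv_rhs => rw [Nat.add_mod]
  simp [Nat.mod_mod_of_dvd]

lemma add_mod_right' (i x : ℕ) : (i % n + x) % n = (i + x) % n := by
  conv_lhs => rw [Nat.add_mod]
  conv_rhs => rw [Nat.add_mod]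
  simp [Nat.mod_mod_of_dvd]

lemma mod_inv_lemma (hn : 0 < n) {j : ℕ} (hj : j < n) (i : ℕ) :
    (i + (j + (n - i % n))) % n = j := by
  have h1 : i % n < n := Nat.mod_lt _ hn
  rw [← add_mod_right' i]
  have : i % n + (j + (n - i % n)) = j + n := by omega
  rw [this, Nat.add_mod_right, Nat.mod_eq_of_lt hj]

/-- rotation-invariance of sums over a full period -/
lemma sum_range_rot {M : Type*} [AddCommMonoid M] (hn : 0 < n) (g : ℕ → M) (i : ℕ) :
    ∑ j ∈ range n, g ((i + j) % n) = ∑ j ∈ range n, g j := by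
  refine Finset.sum_nbij' (i := fun j => (i + j) % n) (j := fun j => (j + (n - i % n)) % n)
    ?_ ?_ ?_ ?_ ?_
  · intro a ha; exact mem_range.mpr (Nat.mod_lt _ hn)
  · intro a ha; exact mem_range.mpr (Nat.mod_lt _ hn)
  · intro a ha
    show ((i + a) % n + (n - i % n)) % n = a
    rw [add_mod_right' (i + a), add_assoc]
    exact mod_inv_lemma hn (mem_range.mp ha) i
  · intro a ha
    show (i + (a + (n - i % n)) % n) % n = a
    rw [add_mod_left' i]
    exact mod_inv_lemma hn (mem_range.mp ha) i
  · intro a ha; rfl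

lemma ps_rot (hn : 0 < n) (i : ℕ) : ps (rot n i b) n = ps b n := by
  unfold ps rot
  rw [Finset.sum_congr rfl (fun j hj => if_pos (mem_range.mp hj))]
  exact sum_range_rot hn (fun x => b x) i

lemma rot_rot (i m : ℕ) : rot n i (rot n m b) = rot n (m + i) b := by
  funext j
  unfold rot
  by_cases h : j < n
  · have hn : 0 < n := by omega
    rw [if_pos h, if_pos (Nat.mod_lt _ hn), add_mod_left' m, ← add_assoc, eq_comm, if_pos h]
  · rw [if_neg h, if_neg h]

lemma rot_self (hb : ∀ j, n ≤ j → b j = 0) : rot n n b = b := by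
  funext j
  unfold rot
  by_cases h : j < n
  · rw [if_pos h, Nat.add_mod_left, Nat.mod_eq_of_lt h]
  · rw [if_neg h]; exact (hb j (le_of_not_gt h)).symm


lemma per_period (j : ℕ) : per n b (j + n) = per n b j := by
  simp [per, Nat.add_mod_right]

lemma ps_per_eq (hn : 0 < n) : ps (per n b) n = ps b n := by
  unfold ps
  refine Finset.sum_congr rfl (fun j hj => ?_)
  unfold per
  rw [Nat.mod_eq_of_lt (mem_range.mp hj)]

lemma sum_per_window (hn : 0 < n) (t : ℕ) :
    ∑ j ∈ Ico t (t + n), per n b j = ps b n := by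
  induction t with
  | zero =>
    rw [Nat.zero_add, ← Finset.range_eq_Ico]
    exact ps_per_eq hn
  | succ t ih =>
    have h1 : ∑ j ∈ Ico t (t + n + 1), per n b j
        = ∑ j ∈ Ico t (t + n), per n b j + per n b (t + n) :=
      Finset.sum_Ico_succ_top (by omega) _
    have h2 : ∑ j ∈ Ico t (t + n + 1), per n b j
        = per n b t + ∑ j ∈ Ico (t + 1) (t + n + 1), per n b j :=
      Finset.sum_eq_sum_Ico_succ_bot (by omega) _
    have h3 : t + 1 + n = t + n + 1 := by omega
    rw [h3, ← ih]
    have := per_period (n := n) (b := b) t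
    omega

lemma ps_per_add (i t : ℕ) : ps (per n b) (i + t) = ps (per n b) i + ∑ j ∈ range t, per n b (i + j) := by
  unfold ps
  have h1 := Finset.sum_Ico_eq_sum_range (f := fun j => per n b j) i (i + t)
  have h2 : i + t - i = t := by omega
  rw [h2] at h1
  rw [← h1, Finset.range_eq_Ico, Finset.range_eq_Ico]
  exact (Finset.sum_Ico_consecutive (per n b) (by omega) (by omega)).symm

lemma F_add_n (hn : 0 < n) (t : ℕ) : F n b (t + n) = F n b t + ((ps b n : ℤ) - n) := by
  unfold F
  have : ps (per n b) (t + n) = ps (per n b) t + ps b n := by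
    rw [ps_per_add]
    congr 1
    rw [← sum_per_window (b := b) hn t]
    have h1 := Finset.sum_Ico_eq_sum_range (f := fun j => per n b j) t (t + n)
    have h2 : t + n - t = n := by omega
    rw [h2] at h1
    exact h1.symm
  rw [this]
  push_cast
  ring

lemma F_succ_ge (t : ℕ) : F n b t ≤ F n b (t + 1) + 1 := by
  unfold F
  have : ps (per n b) (t + 1) = ps (per n b) t + per n b t := Finset.sum_range_succ _ _
  rw [this]
  push_cast
  omega

lemma ps_rot_eq (hn : 0 < n) (i : ℕ) {t : ℕ} (ht : t ≤ n) :
    (ps (rot n i b) t : ℤ) = F n b (i + t) - F n b i + t := by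
  have h1 : ps (rot n i b) t = ∑ j ∈ range t, per n b (i + j) := by
    unfold ps rot per
    refine Finset.sum_congr rfl (fun j hj => ?_)
    have hjt : j < t := mem_range.mp hj
    rw [if_pos (by omega : j < n)]
  have h2 := ps_per_add (n := n) (b := b) i t
  rw [h1]
  unfold F
  rw [h2]
  push_cast
  ring

lemma good_rot_iff (hn : 0 < n) (i : ℕ) :
    Good n (rot n i b) ↔ ∀ t, 1 ≤ t → t ≤ n → F n b (i + t) < F n b i := by
  constructor
  · intro hg t h1 h2
    have := hg t h1 h2
    have h3 := ps_rot_eq (b := b) hn i h2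
    omega
  · intro hg t h1 h2
    have := hg t h1 h2
    have h3 := ps_rot_eq (b := b) hn i h2
    have : (ps (rot n i b) t : ℤ) < t := by omega
    exact_mod_cast this

lemma F_mem_M {u i : ℕ} (hu : i ≤ u) (hu2 : u ≤ i + n) : F n b u ≤ M n b i :=
  Finset.le_sup' _ (Finset.mem_Icc.mpr ⟨hu, hu2⟩)

lemma M_le_iff {i : ℕ} {c : ℤ} : M n b i ≤ c ↔ ∀ u, i ≤ u → u ≤ i + n → F n b u ≤ c := by
  unfold M
  rw [Finset.sup'_le_iff]
  constructor
  · intro h u h1 h2; exact h u (Finset.mem_Icc.mpr ⟨h1, h2⟩)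
  · intro h u hu; exact h u (Finset.mem_Icc.mp hu).1 (Finset.mem_Icc.mp hu).2

lemma M_lt_iff {i : ℕ} {c : ℤ} : M n b i < c ↔ ∀ u, i ≤ u → u ≤ i + n → F n b u < c := by
  unfold M
  rw [Finset.sup'_lt_iff]
  constructor
  · intro h u h1 h2; exact h u (Finset.mem_Icc.mpr ⟨h1, h2⟩)
  · intro h u hu; exact h u (Finset.mem_Icc.mp hu).1 (Finset.mem_Icc.mp hu).2

section MFacts
variable (hn : 0 < n) (hs : ps b n < n)
include hn hs

lemma F_add_n_lt (t : ℕ) : F n b (t + n) < F n b t := by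
  have := F_add_n (b := b) hn t
  have h2 : (ps b n : ℤ) - n < 0 := by
    have : (ps b n : ℤ) < n := by exact_mod_cast hs
    omega
  omega

lemma good_iff_M (i : ℕ) : Good n (rot n i b) ↔ M n b (i + 1) < F n b i := by
  rw [good_rot_iff hn, M_lt_iff]
  constructor
  · intro h u h1 h2
    rcases Nat.lt_or_ge u (i + 1 + n) with hu | hu
    · have := h (u - i) (by omega) (by omega)
      have he : i + (u - i) = u := by omega
      rwa [he] at this
    · have hu' : u = i + 1 + n := by omega
      have h4 : F n b (i + 1 + n) < F n b (i + 1) := F_add_n_lt hn hs (i + 1)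
      have h5 := h 1 (le_refl 1) hn
      rw [hu']
      omega
  · intro h t h1 h2
    exact h (i + t) (by omega) (by omega)

lemma M_succ_le : M n b (i + 1) ≤ M n b i := by
  rw [M_le_iff]
  intro u h1 h2
  rcases Nat.lt_or_ge u (i + 1 + n) with hu | hu
  · exact F_mem_M (by omega) (by omega)
  · have hu' : u = i + 1 + n := by omega
    have h4 : F n b (i + 1 + n) < F n b (i + 1) := F_add_n_lt hn hs (i + 1)
    have h5 : F n b (i + 1) ≤ M n b i := F_mem_M (by omega) (by omega)
    rw [hu']; omega

lemma M_le_succ : M n b i ≤ M n b (i + 1) + 1 := by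
  rw [M_le_iff]
  intro u h1 h2
  rcases Nat.eq_or_lt_of_le h1 with hu | hu
  · have h4 : F n b (i + 1) ≤ M n b (i + 1) := F_mem_M (le_refl _) (by omega)
    have h5 := F_succ_ge (n := n) (b := b) i
    rw [← hu]; omega
  · have : F n b u ≤ M n b (i + 1) := F_mem_M (by omega) (by omega)
    omega

lemma M_step (i : ℕ) :
    M n b i - M n b (i + 1) = if Good n (rot n i b) then 1 else 0 := by
  by_cases hg : Good n (rot n i b)
  · rw [if_pos hg]
    have h1 : M n b (i + 1) < F n b i := (good_iff_M hn hs i).mp hg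
    have h2 : F n b i ≤ M n b i := F_mem_M (le_refl _) (by omega)
    have h3 := M_le_succ (b := b) (i := i) hn hs
    omega
  · rw [if_neg hg]
    have h1 : ¬ M n b (i + 1) < F n b i := fun h => hg ((good_iff_M hn hs i).mpr h)
    have h2 : M n b i ≤ M n b (i + 1) := by
      rw [M_le_iff]
      intro u hu1 hu2
      rcases Nat.eq_or_lt_of_le hu1 with hu | hu
      · rw [← hu]; omega
      · exact F_mem_M (by omega) (by omega)
    have h3 := M_succ_le (b := b) (i := i) hn hs
    omega

lemma M_shift : M n b n = M n b 0 + ((ps b n : ℤ) - n) := by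
  have le1 : M n b n ≤ M n b 0 + ((ps b n : ℤ) - n) := by
    rw [M_le_iff]
    intro u h1 h2
    have : F n b u = F n b (u - n) + ((ps b n : ℤ) - n) := by
      have := F_add_n (b := b) hn (u - n)
      have he : u - n + n = u := by omega
      rw [he] at this
      omega
    have h4 : F n b (u - n) ≤ M n b 0 := F_mem_M (by omega) (by omega)
    omega
  have le2 : M n b 0 + ((ps b n : ℤ) - n) ≤ M n b n := by
    have : M n b 0 ≤ M n b n - ((ps b n : ℤ) - n) := by
      rw [M_le_iff]
      intro u h1 h2
      have h3 := F_add_n (b := b) hn u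
      have h4 : F n b (u + n) ≤ M n b n := F_mem_M (by omega) (by omega)
      omega
    omega
  omega

lemma cycle_count :
    ((range n).filter fun i => Good n (rot n i b)).card = n - ps b n := by
  have tel : ∑ i ∈ range n, (M n b i - M n b (i + 1)) = M n b 0 - M n b n :=
    Finset.sum_range_sub' (fun i => M n b i) n
  have tel2 : ∑ i ∈ range n, (M n b i - M n b (i + 1))
      = ∑ i ∈ range n, (if Good n (rot n i b) then (1 : ℤ) else 0) :=
    Finset.sum_congr rfl (fun i _ => M_step hn hs i)
  have hcard : ∑ i ∈ range n, (if Good n (rot n i b) then (1 : ℤ) else 0)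
      = ((range n).filter fun i => Good n (rot n i b)).card := by
    rw [Finset.sum_boole]
  have hM : M n b 0 - M n b n = (n : ℤ) - ps b n := by
    rw [M_shift hn hs]; ring
  have : (((range n).filter fun i => Good n (rot n i b)).card : ℤ) = (n : ℤ) - ps b n := by
    omega
  omega

end MFacts

/-- The cycle lemma, all cases. -/
lemma cycle_count' (hn : 0 < n) (b : ℕ → ℕ) :
    ((range n).filter fun i => Good n (rot n i b)).card = n - ps b n := by
  rcases Nat.lt_or_ge (ps b n) n with hs | hs
  · exact cycle_count hn hs
  · have h0 : n - ps b n = 0 := by omega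
    rw [h0, Finset.card_eq_zero, Finset.filter_eq_empty_iff]
    intro i _ hg
    have := hg n hn (le_refl n)
    have h2 := ps_rot (b := b) hn i
    omega

end Cycle


/-- number of nonzero entries among the first `n` -/
def cnt (n : ℕ) (b : ℕ → ℕ) : ℕ := ((range n).filter fun j => b j ≠ 0).card

def extn (n : ℕ) (f : Fin n → ℕ) : ℕ → ℕ := fun j => if h : j < n then f ⟨j, h⟩ else 0

def AllB (n k : ℕ) : Finset (ℕ → ℕ) :=
  (Fintype.piFinset fun _ : Fin n => range (k + 1)).image (extn n)

lemma mem_AllB {n k : ℕ} {b : ℕ → ℕ} :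
    b ∈ AllB n k ↔ (∀ j, n ≤ j → b j = 0) ∧ (∀ j, b j ≤ k) := by
  unfold AllB
  rw [Finset.mem_image]
  constructor
  · rintro ⟨f, hf, rfl⟩
    rw [Fintype.mem_piFinset] at hf
    constructor
    · intro j hj; unfold extn; rw [dif_neg (by omega)]
    · intro j
      unfold extn
      by_cases h : j < n
      · rw [dif_pos h]
        have := hf ⟨j, h⟩
        rw [mem_range] at this
        omega
      · rw [dif_neg h]; omega
  · rintro ⟨h1, h2⟩
    refine ⟨fun i => b i, ?_, ?_⟩
    · rw [Fintype.mem_piFinset]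
      intro a
      rw [mem_range]
      have := h2 a
      omega
    · funext j
      unfold extn
      by_cases h : j < n
      · rw [dif_pos h]
      · rw [dif_neg h]
        exact (h1 j (by omega)).symm

def BB (n k r : ℕ) : Finset (ℕ → ℕ) := (AllB n k).filter fun b => cnt n b = r - 1

def GoodB (n k r : ℕ) : Finset (ℕ → ℕ) := (BB n k r).filter (Good n)

def GG (n k r : ℕ) : Finset (ℕ × (ℕ → ℕ)) :=
  ((range n) ×ˢ BB n k r).filter fun p => Good n (rot n p.1 p.2)

def SS (n k r : ℕ) : Finset (ℕ × (ℕ → ℕ)) :=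
  ((Icc 1 n) ×ˢ BB n k r).filter fun p => p.1 + ps p.2 n ≤ n

section Counting

variable {n k r : ℕ}

lemma cnt_rot (hn : 0 < n) (b : ℕ → ℕ) (i : ℕ) : cnt n (rot n i b) = cnt n b := by
  unfold cnt
  have h1 : ∀ c : ℕ → ℕ, ((range n).filter fun j => c j ≠ 0).card
      = ∑ j ∈ range n, (if c j ≠ 0 then 1 else 0) := by
    intro c; rw [Finset.card_filter]
  rw [h1, h1]
  have h2 : ∀ j ∈ range n, (if rot n i b j ≠ 0 then (1:ℕ) else 0)
      = (fun x => if b x ≠ 0 then (1:ℕ) else 0) ((i + j) % n) := by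
    intro j hj
    unfold rot
    rw [if_pos (mem_range.mp hj)]
  rw [Finset.sum_congr rfl h2]
  exact sum_range_rot hn (fun x => if b x ≠ 0 then (1:ℕ) else 0) i

lemma rot_mem_AllB (hn : 0 < n) {b : ℕ → ℕ} (hb : b ∈ AllB n k) (i : ℕ) :
    rot n i b ∈ AllB n k := by
  rw [mem_AllB] at hb ⊢
  constructor
  · intro j hj; unfold rot; rw [if_neg (by omega)]
  · intro j
    unfold rot
    by_cases h : j < n
    · rw [if_pos h]; exact hb.2 _
    · rw [if_neg h]; omega

lemma rot_mem_BB (hn : 0 < n) {b : ℕ → ℕ} (hb : b ∈ BB n k r) (i : ℕ) :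
    rot n i b ∈ BB n k r := by
  unfold BB at hb ⊢
  rw [Finset.mem_filter] at hb ⊢
  exact ⟨rot_mem_AllB hn hb.1 i, by rw [cnt_rot hn]; exact hb.2⟩

lemma fiber_card (hn : 0 < n) {c : ℕ → ℕ} (hc : c ∈ GoodB n k r) :
    ((GG n k r).filter fun p => rot n p.1 p.2 = c).card = (range n).card := by
  have hc' := hc
  unfold GoodB at hc'
  rw [Finset.mem_filter] at hc'
  obtain ⟨hcB, hcG⟩ := hc'
  have hsupp : ∀ j, n ≤ j → c j = 0 := by
    unfold BB at hcB
    rw [Finset.mem_filter, mem_AllB] at hcB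
    exact hcB.1.1
  refine Finset.card_nbij' (i := fun p => p.1) (j := fun i => (i, rot n (n - i) c)) ?_ ?_ ?_ ?_
  · rintro ⟨i, b⟩ hp
    rw [Finset.mem_coe, Finset.mem_filter] at hp
    have := hp.1
    unfold GG at this
    rw [Finset.mem_filter, Finset.mem_product] at this
    exact this.1.1
  · intro i hi
    rw [Finset.mem_coe, Finset.mem_filter]
    have hin : i < n := mem_range.mp hi
    have hrot : rot n i (rot n (n - i) c) = c := by
      rw [rot_rot]
      have : n - i + i = n := by omega
      rw [this]
      exact rot_self hsupp
    constructor
    · unfold GG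
      rw [Finset.mem_filter, Finset.mem_product]
      refine ⟨⟨hi, rot_mem_BB hn hcB _⟩, ?_⟩
      show Good n (rot n i (rot n (n - i) c))
      rw [hrot]
      exact hcG
    · exact hrot
  · rintro ⟨i, b⟩ hp
    rw [Finset.mem_coe, Finset.mem_filter] at hp
    obtain ⟨hp1, hp2⟩ := hp
    unfold GG at hp1
    rw [Finset.mem_filter, Finset.mem_product] at hp1
    have hin : i < n := mem_range.mp hp1.1.1
    have hbsupp : ∀ j, n ≤ j → b j = 0 := by
      have := hp1.1.2
      unfold BB at this
      rw [Finset.mem_filter, mem_AllB] at this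
      exact this.1.1
    dsimp only at hp2
    show (i, rot n (n - i) c) = (i, b)
    rw [← hp2, rot_rot]
    have h5 : i + (n - i) = n := by omega
    rw [h5, rot_self hbsupp]
  · intro p hp; rfl

/-- Lemma A : double counting `GG` fiberwise over the rotation result -/
lemma GG_card (hn : 0 < n) : (GG n k r).card = n * (GoodB n k r).card := by
  have hmap : ∀ p ∈ GG n k r, rot n p.1 p.2 ∈ GoodB n k r := by
    rintro ⟨i, b⟩ hp
    unfold GG at hp
    rw [Finset.mem_filter, Finset.mem_product] at hp
    unfold GoodB
    rw [Finset.mem_filter]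
    exact ⟨rot_mem_BB hn hp.1.2 i, hp.2⟩
  rw [Finset.card_eq_sum_card_fiberwise hmap]
  have hfib : ∀ c ∈ GoodB n k r, ((GG n k r).filter fun p => rot n p.1 p.2 = c).card = n := by
    intro c hc
    have h := fiber_card hn hc
    rwa [Finset.card_range] at h
  rw [Finset.sum_congr rfl hfib, Finset.sum_const, smul_eq_mul, mul_comm]

/-- Lemma B : counting `GG` fiberwise over `b`, using the cycle lemma -/
lemma GG_card' (hn : 0 < n) : (GG n k r).card = ∑ b ∈ BB n k r, (n - ps b n) := by
  have hmap : ∀ p ∈ GG n k r, p.2 ∈ BB n k r := by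
    rintro ⟨i, b⟩ hp
    unfold GG at hp
    rw [Finset.mem_filter, Finset.mem_product] at hp
    exact hp.1.2
  rw [Finset.card_eq_sum_card_fiberwise hmap]
  refine Finset.sum_congr rfl (fun b hb => ?_)
  rw [← cycle_count' hn b]
  refine Finset.card_nbij' (i := fun p => p.1) (j := fun i => (i, b)) ?_ ?_ ?_ ?_
  · rintro ⟨i, c⟩ hp
    rw [Finset.mem_coe, Finset.mem_filter] at hp
    obtain ⟨hp1, hp2⟩ := hp
    unfold GG at hp1
    rw [Finset.mem_filter, Finset.mem_product] at hp1
    rw [Finset.mem_coe, Finset.mem_filter]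
    refine ⟨hp1.1.1, ?_⟩
    have : c = b := hp2
    rw [← this]
    exact hp1.2
  · intro i hi
    rw [Finset.mem_coe, Finset.mem_filter] at hi ⊢
    refine ⟨?_, rfl⟩
    unfold GG
    rw [Finset.mem_filter, Finset.mem_product]
    exact ⟨⟨hi.1, hb⟩, hi.2⟩
  · rintro ⟨i, c⟩ hp
    rw [Finset.mem_coe, Finset.mem_filter] at hp
    have : c = b := hp.2
    rw [this]
  · intro p hp; rfl

/-- Lemma C : `SS` counted fiberwise over `b` -/
lemma SS_card (hn : 0 < n) : (SS n k r).card = ∑ b ∈ BB n k r, (n - ps b n) := by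
  have hmap : ∀ p ∈ SS n k r, p.2 ∈ BB n k r := by
    rintro ⟨t, b⟩ hp
    unfold SS at hp
    rw [Finset.mem_filter, Finset.mem_product] at hp
    exact hp.1.2
  rw [Finset.card_eq_sum_card_fiberwise hmap]
  refine Finset.sum_congr rfl (fun b hb => ?_)
  have : ((SS n k r).filter fun p => p.2 = b) = (Icc 1 (n - ps b n)).image (fun t => (t, b)) := by
    ext p
    rcases p with ⟨t, c⟩
    rw [Finset.mem_filter, Finset.mem_image]
    constructor
    · rintro ⟨hp1, hp2⟩
      unfold SS at hp1
      rw [Finset.mem_filter, Finset.mem_product, Finset.mem_Icc] at hp1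
      dsimp only at hp1 hp2
      subst hp2
      refine ⟨t, ?_, rfl⟩
      rw [Finset.mem_Icc]
      omega
    · rintro ⟨t', ht', he⟩
      injection he with h1 h2
      subst h1
      subst h2
      rw [Finset.mem_Icc] at ht'
      refine ⟨?_, rfl⟩
      unfold SS
      rw [Finset.mem_filter, Finset.mem_product, Finset.mem_Icc]
      dsimp only
      exact ⟨⟨⟨ht'.1, by omega⟩, hb⟩, by omega⟩
  rw [this, Finset.card_image_of_injective _ (fun a a' h => congrArg Prod.fst h), Nat.card_Icc]
  omega

end Counting

/-! ### Compositions: `Pset ρ m M` -/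

def Pset (ρ m M : ℕ) : Finset (ℕ × (Fin ρ → ℕ)) :=
  ((Icc 1 M) ×ˢ Fintype.piFinset fun _ : Fin ρ => Icc 1 M).filter fun p => p.1 + ∑ i, p.2 i ≤ m

section PsetFacts

lemma mem_Pset {ρ m M : ℕ} {p : ℕ × (Fin ρ → ℕ)} :
    p ∈ Pset ρ m M ↔ ((1 ≤ p.1 ∧ p.1 ≤ M) ∧ ∀ i, 1 ≤ p.2 i ∧ p.2 i ≤ M)
      ∧ p.1 + ∑ i, p.2 i ≤ m := by
  unfold Pset
  rw [Finset.mem_filter, Finset.mem_product, Fintype.mem_piFinset]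
  simp only [Finset.mem_Icc]

lemma single_le_sum_fin {ρ : ℕ} (c : Fin ρ → ℕ) (i : Fin ρ) : c i ≤ ∑ j, c j :=
  Finset.single_le_sum (fun j _ => Nat.zero_le _) (Finset.mem_univ i)

lemma Pset_amb {ρ m M : ℕ} (h : m ≤ M) : Pset ρ m M = Pset ρ m m := by
  ext p
  rw [mem_Pset, mem_Pset]
  constructor
  · rintro ⟨⟨h1, h2⟩, h3⟩
    refine ⟨⟨⟨h1.1, by omega⟩, fun i => ?_⟩, h3⟩
    have := single_le_sum_fin p.2 i
    exact ⟨(h2 i).1, by omega⟩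
  · rintro ⟨⟨h1, h2⟩, h3⟩
    refine ⟨⟨⟨h1.1, by omega⟩, fun i => ?_⟩, h3⟩
    have := (h2 i).2
    exact ⟨(h2 i).1, by omega⟩

lemma sum_Icc_choose_sub (m q : ℕ) :
    ∑ v ∈ Icc 1 m, (m - v).choose q = m.choose (q + 1) := by
  rcases Nat.eq_zero_or_pos m with rfl | hm
  · simp
  have h1 : ∑ v ∈ Icc 1 m, (m - v).choose q = ∑ w ∈ range m, w.choose q := by
    refine Finset.sum_nbij' (i := fun v => m - v) (j := fun w => m - w) ?_ ?_ ?_ ?_ ?_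
    · intro v hv; rw [Finset.mem_Icc] at hv; rw [mem_range]; omega
    · intro w hw; rw [mem_range] at hw; rw [Finset.mem_Icc]; omega
    · intro v hv; rw [Finset.mem_Icc] at hv; omega
    · intro w hw; rw [mem_range] at hw; omega
    · intro v hv; rfl
  rw [h1]
  have h2 : ∑ w ∈ range m, w.choose q = ∑ w ∈ Icc q (m - 1), w.choose q := by
    rw [eq_comm]
    refine Finset.sum_subset ?_ ?_
    · intro w hw; rw [Finset.mem_Icc] at hw; rw [mem_range]; omega
    · intro w hw hw2
      rw [mem_range] at hw
      rw [Finset.mem_Icc] at hw2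
      exact Nat.choose_eq_zero_of_lt (by omega)
  rw [h2, Nat.sum_Icc_choose]
  congr 1
  omega

lemma Pset_card (ρ : ℕ) : ∀ m : ℕ, (Pset ρ m m).card = m.choose (ρ + 1) := by
  induction ρ with
  | zero =>
    intro m
    have he : Pset 0 m m = (Icc 1 m) ×ˢ (Fintype.piFinset fun _ : Fin 0 => Icc 1 m) := by
      ext p
      unfold Pset
      rw [Finset.mem_filter]
      constructor
      · exact fun h => h.1
      · intro h
        refine ⟨h, ?_⟩
        have : ∑ i : Fin 0, p.2 i = 0 := by simp
        rw [this]
        rw [Finset.mem_product, Finset.mem_Icc] at h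
        omega
    rw [he, Finset.card_product]
    have : (Fintype.piFinset fun _ : Fin 0 => Icc 1 m).card = 1 := by
      rw [Fintype.card_piFinset]
      simp
    rw [this, Nat.card_Icc, Nat.choose_one_right]
    omega
  | succ ρ ih =>
    intro m
    rcases Nat.eq_zero_or_pos m with rfl | hm
    · have : Pset (ρ + 1) 0 0 = ∅ := by
        rw [Finset.eq_empty_iff_forall_notMem]
        intro p hp
        rw [mem_Pset] at hp
        have := hp.1.1
        omega
      rw [this]
      simp
    have hmap : ∀ p ∈ Pset (ρ + 1) m m, p.2 0 ∈ Icc 1 m := by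
      intro p hp
      rw [mem_Pset] at hp
      rw [Finset.mem_Icc]
      exact hp.1.2 0
    rw [Finset.card_eq_sum_card_fiberwise hmap]
    have hfib : ∀ v ∈ Icc 1 m,
        ((Pset (ρ + 1) m m).filter fun p => p.2 0 = v).card = (m - v).choose (ρ + 1) := by
      intro v hv
      rw [Finset.mem_Icc] at hv
      rw [← ih (m - v)]
      refine Finset.card_nbij' (i := fun p => (p.1, fun j => p.2 j.succ))
        (j := fun q => (q.1, Fin.cons v q.2)) ?_ ?_ ?_ ?_
      · rintro ⟨t, c⟩ hp
        rw [Finset.mem_coe, Finset.mem_filter, mem_Pset] at hp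
        dsimp only at hp
        obtain ⟨⟨⟨⟨ht, _⟩, hc⟩, hsum⟩, h0⟩ := hp
        have hsplit : ∑ i, c i = c 0 + ∑ j : Fin ρ, c j.succ := Fin.sum_univ_succ c
        rw [Finset.mem_coe, mem_Pset]
        dsimp only
        have htail : ∀ j : Fin ρ, c j.succ ≤ ∑ i : Fin ρ, c i.succ :=
          fun j => single_le_sum_fin (fun i => c i.succ) j
        refine ⟨⟨⟨ht, by omega⟩, fun j => ?_⟩, by omega⟩
        have := (hc j.succ).1
        have := htail j
        omega
      · rintro ⟨t, c⟩ hq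
        rw [Finset.mem_coe, mem_Pset] at hq
        dsimp only at hq
        obtain ⟨⟨⟨ht, ht2⟩, hc⟩, hsum⟩ := hq
        rw [Finset.mem_coe, Finset.mem_filter, mem_Pset]
        dsimp only
        have hsplit : ∑ i : Fin (ρ + 1), Fin.cons v c i
            = v + ∑ j : Fin ρ, c j := by
          rw [Fin.sum_univ_succ]
          simp
        refine ⟨⟨⟨⟨ht, by omega⟩, fun i => ?_⟩, by omega⟩, Fin.cons_zero _ _⟩
        refine Fin.cases ?_ ?_ i
        · simp; omega
        · intro j
          rw [Fin.cons_succ]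
          have := hc j
          omega
      · rintro ⟨t, c⟩ hp
        rw [Finset.mem_coe, Finset.mem_filter] at hp
        have h0 : c 0 = v := hp.2
        show (t, Fin.cons v (fun j => c j.succ)) = (t, c)
        rw [← h0]
        congr 1
        exact Fin.cons_self_tail c
      · rintro ⟨t, c⟩ hq
        show (t, fun j : Fin ρ => (Fin.cons v c : Fin (ρ+1) → ℕ) j.succ) = (t, c)
        congr 1
    rw [Finset.sum_congr rfl hfib, sum_Icc_choose_sub]

end PsetFacts

/-! ### `Aset` : bounded compositions with an unbounded head -/

def Aset (n k ρ : ℕ) : Finset (ℕ × (Fin ρ → ℕ)) :=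
  ((Icc 1 n) ×ˢ Fintype.piFinset fun _ : Fin ρ => Icc 1 k).filter fun p => p.1 + ∑ i, p.2 i ≤ n

lemma mem_Aset {n k ρ : ℕ} {p : ℕ × (Fin ρ → ℕ)} :
    p ∈ Aset n k ρ ↔ ((1 ≤ p.1 ∧ p.1 ≤ n) ∧ ∀ i, 1 ≤ p.2 i ∧ p.2 i ≤ k)
      ∧ p.1 + ∑ i, p.2 i ≤ n := by
  unfold Aset
  rw [Finset.mem_filter, Finset.mem_product, Fintype.mem_piFinset]
  simp only [Finset.mem_Icc]

section Part2

variable {n k r : ℕ}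

lemma sum_via_iso {T : Finset ℕ} {q : ℕ} (hq : T.card = q) (b : ℕ → ℕ) :
    ∑ x ∈ T, b x = ∑ i : Fin q, b ((T.orderIsoOfFin hq) i : ℕ) := by
  rw [← Finset.sum_attach T b, ← Finset.univ_eq_attach]
  exact (Equiv.sum_comp (T.orderIsoOfFin hq).toEquiv (fun x : {x // x ∈ T} => b ↑x)).symm

lemma mem_BB {b : ℕ → ℕ} : b ∈ BB n k r ↔
    ((∀ j, n ≤ j → b j = 0) ∧ (∀ j, b j ≤ k)) ∧ cnt n b = r - 1 := by
  unfold BB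
  rw [Finset.mem_filter, mem_AllB]

/-- Part 2 : counting `SS` by the support of `b`. -/
lemma SS_card_eq (hn : 0 < n) (hr : 1 ≤ r) :
    (SS n k r).card = n.choose (r - 1) * (Aset n k (r - 1)).card := by
  have hmap : ∀ p ∈ SS n k r, ((range n).filter fun j => p.2 j ≠ 0) ∈
      Finset.powersetCard (r - 1) (range n) := by
    rintro ⟨t, b⟩ hp
    unfold SS at hp
    rw [Finset.mem_filter, Finset.mem_product] at hp
    have hb := hp.1.2
    rw [mem_BB] at hb
    rw [Finset.mem_powersetCard]
    exact ⟨Finset.filter_subset _ _, hb.2⟩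
  rw [Finset.card_eq_sum_card_fiberwise hmap]
  have hfib : ∀ T ∈ Finset.powersetCard (r - 1) (range n),
      ((SS n k r).filter fun p => ((range n).filter fun j => p.2 j ≠ 0) = T).card
        = (Aset n k (r - 1)).card := by
    intro T hT
    rw [Finset.mem_powersetCard] at hT
    obtain ⟨hTsub, hTcard⟩ := hT
    set σ := T.orderIsoOfFin hTcard with hσ
    refine Finset.card_nbij' (i := fun p => (p.1, fun i : Fin (r - 1) => p.2 ((σ i : ℕ))))
      (j := fun q => (q.1, fun j : ℕ => if h : j ∈ T then q.2 (σ.symm ⟨j, h⟩) else 0))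
      ?_ ?_ ?_ ?_
    · rintro ⟨t, b⟩ hp
      rw [Finset.mem_coe, Finset.mem_filter] at hp
      obtain ⟨hp1, hp2⟩ := hp
      unfold SS at hp1
      rw [Finset.mem_filter, Finset.mem_product, Finset.mem_Icc] at hp1
      dsimp only at hp1 hp2 ⊢
      obtain ⟨⟨htn, hbB⟩, hsum⟩ := hp1
      rw [mem_BB] at hbB
      have hps : ps b n = ∑ i : Fin (r - 1), b ((σ i : ℕ)) := by
        unfold ps
        rw [← Finset.sum_filter_ne_zero (range n) (f := b), hp2]
        exact sum_via_iso hTcard b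
      rw [Finset.mem_coe, mem_Aset]
      dsimp only
      refine ⟨⟨htn, fun i => ?_⟩, by omega⟩
      have hmem : ((σ i : ℕ)) ∈ (range n).filter fun j => b j ≠ 0 := by
        rw [hp2]; exact (σ i).2
      rw [Finset.mem_filter] at hmem
      have := hmem.2
      exact ⟨by omega, hbB.1.2 _⟩
    · rintro ⟨t, c⟩ hq
      rw [Finset.mem_coe, mem_Aset] at hq
      dsimp only at hq ⊢
      obtain ⟨⟨htn, hc⟩, hsum⟩ := hq
      set b : ℕ → ℕ := fun j => if h : j ∈ T then c (σ.symm ⟨j, h⟩) else 0 with hbdef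
      have hfil : ((range n).filter fun j => b j ≠ 0) = T := by
        ext j
        rw [Finset.mem_filter]
        constructor
        · rintro ⟨_, hj⟩
          by_contra hjT
          rw [hbdef] at hj
          simp only [dif_neg hjT] at hj
          exact hj rfl
        · intro hj
          refine ⟨mem_range.mpr (by have := hTsub hj; rwa [← mem_range]), ?_⟩
          rw [hbdef]
          simp only [dif_pos hj]
          have := (hc (σ.symm ⟨j, hj⟩)).1
          omega
      have hbσ : ∀ i : Fin (r - 1), b ((σ i : ℕ)) = c i := by
        intro i
        rw [hbdef]
        have hmem : ((σ i : ℕ)) ∈ T := (σ i).2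
        simp only [dif_pos hmem]
        congr 1
        rw [show (⟨(σ i : ℕ), hmem⟩ : {x // x ∈ T}) = σ i from Subtype.ext rfl]
        exact σ.symm_apply_apply i
      have hps : ps b n = ∑ i, c i := by
        unfold ps
        rw [← Finset.sum_filter_ne_zero (range n) (f := b), hfil, sum_via_iso hTcard b]
        exact Finset.sum_congr rfl fun i _ => hbσ i
      rw [Finset.mem_coe, Finset.mem_filter]
      constructor
      · unfold SS
        rw [Finset.mem_filter, Finset.mem_product, Finset.mem_Icc]
        dsimp only
        refine ⟨⟨htn, ?_⟩, by omega⟩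
        rw [mem_BB]
        refine ⟨⟨fun j hj => ?_, fun j => ?_⟩, by rw [cnt, hfil, hTcard]⟩
        · rw [hbdef]
          have : j ∉ T := fun hmem => by
            have := mem_range.mp (hTsub hmem); omega
          simp only [dif_neg this]
        · rw [hbdef]
          by_cases h : j ∈ T
          · simp only [dif_pos h]; exact (hc _).2
          · simp only [dif_neg h]; omega
      · exact hfil
    · rintro ⟨t, b⟩ hp
      rw [Finset.mem_coe, Finset.mem_filter] at hp
      obtain ⟨hp1, hp2⟩ := hp
      unfold SS at hp1
      rw [Finset.mem_filter, Finset.mem_product] at hp1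
      have hbB := hp1.1.2
      rw [mem_BB] at hbB
      dsimp only
      show (t, fun j : ℕ => if h : j ∈ T then b ((σ (σ.symm ⟨j, h⟩) : ℕ)) else 0) = (t, b)
      congr 1
      funext j
      by_cases h : j ∈ T
      · simp only [dif_pos h]
        congr 1
        rw [σ.apply_symm_apply ⟨j, h⟩]
      · simp only [dif_neg h]
        dsimp only at hp2
        rw [← hp2, Finset.mem_filter] at h
        push_neg at h
        by_cases hjn : j < n
        · exact (h (mem_range.mpr hjn)).symm
        · exact (hbB.1.1 j (by omega)).symm
    · rintro ⟨t, c⟩ hq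
      dsimp only
      show (t, fun i : Fin (r - 1) =>
        (fun j : ℕ => if h : j ∈ T then c (σ.symm ⟨j, h⟩) else 0) ((σ i : ℕ))) = (t, c)
      congr 1
      funext i
      have hmem : ((σ i : ℕ)) ∈ T := (σ i).2
      simp only [dif_pos hmem]
      congr 1
      rw [show (⟨(σ i : ℕ), hmem⟩ : {x // x ∈ T}) = σ i from Subtype.ext rfl]
      exact σ.symm_apply_apply i
  rw [Finset.sum_congr rfl hfib, Finset.sum_const, smul_eq_mul,
    Finset.card_powersetCard, Finset.card_range]

end Part2

section Part3

variable {n k ρ : ℕ}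

/-- the set of coordinates exceeding the bound -/
def Over (k : ℕ) {ρ : ℕ} (p : ℕ × (Fin ρ → ℕ)) : Finset (Fin ρ) :=
  Finset.univ.filter fun i => k + 1 ≤ p.2 i

lemma Aset_eq_filter : Aset n k ρ = (Pset ρ n n).filter fun p => Over k p = ∅ := by
  ext p
  rw [mem_Aset, Finset.mem_filter, mem_Pset]
  have ho : Over k p = ∅ ↔ ∀ i, p.2 i ≤ k := by
    unfold Over
    rw [Finset.filter_eq_empty_iff]
    constructor
    · intro h i; have := h (Finset.mem_univ i); omega
    · intro h i _; have := h i; omega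
  rw [ho]
  constructor
  · rintro ⟨⟨ht, hc⟩, hsum⟩
    have hb : ∀ i, p.2 i ≤ ∑ j, p.2 j := fun i => single_le_sum_fin _ i
    exact ⟨⟨⟨ht, fun i => ⟨(hc i).1, by have := hb i; omega⟩⟩, hsum⟩, fun i => (hc i).2⟩
  · rintro ⟨⟨⟨ht, hc⟩, hsum⟩, hk⟩
    exact ⟨⟨ht, fun i => ⟨(hc i).1, hk i⟩⟩, hsum⟩

lemma NJ_card (J : Finset (Fin ρ)) :
    ((Pset ρ n n).filter fun p => J ⊆ Over k p).card = (n - J.card * k).choose (ρ + 1) := by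
  set A := J.card * k with hA
  rw [← Pset_card ρ (n - A)]
  have hJA : ∀ c : Fin ρ → ℕ, (∀ i ∈ J, k + 1 ≤ c i) →
      A ≤ ∑ i, c i ∧ ∑ i, (c i - if i ∈ J then k else 0) = ∑ i, c i - A := by
    intro c hc
    have he : ∑ i, (if i ∈ J then k else 0) = A := by
      rw [Finset.sum_ite_mem, Finset.univ_inter, Finset.sum_const, smul_eq_mul, hA]
    have hle : ∀ i : Fin ρ, (if i ∈ J then k else 0) ≤ c i := by
      intro i
      by_cases h : i ∈ J
      · rw [if_pos h]; have := hc i h; omega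
      · rw [if_neg h]; omega
    constructor
    · rw [← he]
      exact Finset.sum_le_sum fun i _ => hle i
    · rw [Finset.sum_tsub_distrib Finset.univ (fun i _ => hle i), he]
  refine Finset.card_nbij' (i := fun p => (p.1, fun i => p.2 i - if i ∈ J then k else 0))
    (j := fun q => (q.1, fun i => q.2 i + if i ∈ J then k else 0)) ?_ ?_ ?_ ?_
  · rintro ⟨t, c⟩ hp
    rw [Finset.mem_coe, Finset.mem_filter, mem_Pset] at hp
    dsimp only at hp
    obtain ⟨⟨⟨⟨ht1, ht2⟩, hc⟩, hsum⟩, hJ⟩ := hp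
    have hJ' : ∀ i ∈ J, k + 1 ≤ c i := by
      intro i hi
      have := hJ hi
      unfold Over at this
      rw [Finset.mem_filter] at this
      exact this.2
    obtain ⟨hge, hsub⟩ := hJA c hJ'
    rw [Finset.mem_coe, mem_Pset]
    dsimp only
    have hsingle : ∀ i : Fin ρ, c i - (if i ∈ J then k else 0) ≤ ∑ j, (c j - if j ∈ J then k else 0) :=
      fun i => single_le_sum_fin (fun j => c j - if j ∈ J then k else 0) i
    refine ⟨⟨⟨ht1, by omega⟩, fun i => ?_⟩, by omega⟩
    constructor
    · by_cases h : i ∈ J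
      · rw [if_pos h]; have := hJ' i h; omega
      · rw [if_neg h]; have := (hc i).1; omega
    · have h1 := hsingle i
      omega
  · rintro ⟨t, c⟩ hq
    rw [Finset.mem_coe, mem_Pset] at hq
    dsimp only at hq
    obtain ⟨⟨⟨ht1, ht2⟩, hc⟩, hsum⟩ := hq
    have hkA : ∀ i ∈ J, k ≤ A := by
      intro i hi
      have hJ1 : 1 ≤ J.card := Finset.card_pos.mpr ⟨i, hi⟩
      calc k = 1 * k := (one_mul k).symm
        _ ≤ J.card * k := Nat.mul_le_mul_right k hJ1
    have hadd : ∑ i, (c i + if i ∈ J then k else 0) = ∑ i, c i + A := by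
      rw [Finset.sum_add_distrib, Finset.sum_ite_mem, Finset.univ_inter,
        Finset.sum_const, smul_eq_mul, hA]
    rw [Finset.mem_coe, Finset.mem_filter, mem_Pset]
    dsimp only
    have hsingle : ∀ i : Fin ρ, c i ≤ ∑ j, c j := fun i => single_le_sum_fin _ i
    refine ⟨⟨⟨⟨by omega, by omega⟩, fun i => ?_⟩, by omega⟩, ?_⟩
    · constructor
      · by_cases h : i ∈ J
        · rw [if_pos h]; have := (hc i).1; omega
        · rw [if_neg h]; have := (hc i).1; omega
      · have h1 := hsingle i
        by_cases h : i ∈ J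
        · rw [if_pos h]; have := hkA i h; omega
        · rw [if_neg h]; omega
    · intro i hi
      unfold Over
      rw [Finset.mem_filter]
      refine ⟨Finset.mem_univ i, ?_⟩
      dsimp only
      rw [if_pos hi]
      have := (hc i).1
      omega
  · rintro ⟨t, c⟩ hp
    rw [Finset.mem_coe, Finset.mem_filter, mem_Pset] at hp
    dsimp only at hp
    obtain ⟨_, hJ⟩ := hp
    have hJ' : ∀ i ∈ J, k + 1 ≤ c i := by
      intro i hi
      have := hJ hi
      unfold Over at this
      rw [Finset.mem_filter] at this
      exact this.2
    dsimp only
    show (t, fun i => (c i - if i ∈ J then k else 0) + if i ∈ J then k else 0) = (t, c)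
    congr 1
    funext i
    by_cases h : i ∈ J
    · rw [if_pos h]; have := hJ' i h; omega
    · rw [if_neg h]; omega
  · rintro ⟨t, c⟩ hq
    dsimp only
    show (t, fun i => (c i + if i ∈ J then k else 0) - if i ∈ J then k else 0) = (t, c)
    congr 1
    funext i
    omega

/-- Part 3 : inclusion-exclusion. -/
lemma Aset_card_eq :
    ((Aset n k ρ).card : ℤ)
      = ∑ j ∈ range (ρ + 1), (-1) ^ j * (ρ.choose j : ℤ) * ((n - j * k).choose (ρ + 1) : ℤ) := by
  have h1 : ((Aset n k ρ).card : ℤ)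
      = ∑ p ∈ Pset ρ n n, (if Over k p = ∅ then (1 : ℤ) else 0) := by
    rw [Aset_eq_filter, Finset.sum_boole]
  have h2 : ∀ p ∈ Pset ρ n n, (if Over k p = ∅ then (1 : ℤ) else 0)
      = ∑ J ∈ (Finset.univ : Finset (Fin ρ)).powerset,
          (if J ⊆ Over k p then ((-1 : ℤ) ^ J.card) else 0) := by
    intro p _
    rw [← Finset.sum_powerset_neg_one_pow_card (x := Over k p), eq_comm]
    rw [← Finset.sum_filter]
    congr 1
    ext J
    rw [Finset.mem_filter, Finset.mem_powerset, Finset.mem_powerset]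
    constructor
    · exact fun h => h.2
    · exact fun h => ⟨Finset.subset_univ J, h⟩
  rw [h1, Finset.sum_congr rfl h2, Finset.sum_comm]
  have h3 : ∀ J ∈ (Finset.univ : Finset (Fin ρ)).powerset,
      (∑ p ∈ Pset ρ n n, if J ⊆ Over k p then ((-1 : ℤ) ^ J.card) else 0)
        = (-1 : ℤ) ^ J.card * ((n - J.card * k).choose (ρ + 1) : ℤ) := by
    intro J _
    rw [← Finset.sum_filter, Finset.sum_const, ← NJ_card (n := n) (k := k) J]
    rw [nsmul_eq_mul, mul_comm]
  rw [Finset.sum_congr rfl h3]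
  rw [Finset.sum_powerset (Finset.univ : Finset (Fin ρ))
    (fun J => (-1 : ℤ) ^ J.card * ((n - J.card * k).choose (ρ + 1) : ℤ))]
  simp only [Finset.card_univ, Fintype.card_fin]
  refine Finset.sum_congr rfl fun j hj => ?_
  have hinner : ∀ J ∈ Finset.powersetCard j (Finset.univ : Finset (Fin ρ)),
      (-1 : ℤ) ^ J.card * ((n - J.card * k).choose (ρ + 1) : ℤ)
        = (-1 : ℤ) ^ j * ((n - j * k).choose (ρ + 1) : ℤ) := by
    intro J hJ
    have := (Finset.mem_powersetCard.mp hJ).2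
    rw [this]
  rw [Finset.sum_congr rfl hinner, Finset.sum_const, Finset.card_powersetCard,
    Finset.card_univ, Fintype.card_fin, nsmul_eq_mul]
  ring

end Part3

/-! ### Glue : from tree degree sequences to `GoodB` -/

def toB (n : ℕ) (d : ℕ → ℕ) : ℕ → ℕ := fun j => if j < n then d (n - j) else 0

def toD (n : ℕ) (b : ℕ → ℕ) : ℕ → ℕ := fun i =>
  if i = 0 then n - ps b n else if i ≤ n then b (n - i) else 0

def DP (n k r : ℕ) (d : ℕ → ℕ) : Prop :=
  IsTreeDeg n d ∧ (∀ i, 1 ≤ i → i ≤ n → d i ≤ k) ∧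
    ((Finset.range (n + 1)).filter fun i => d i ≠ 0).card = r

section Glue

variable {n k r : ℕ}

lemma sum_rev (hn : 0 < n) (d : ℕ → ℕ) {t : ℕ} (ht : t ≤ n) :
    ps (toB n d) t = ∑ i ∈ Ico (n - t + 1) (n + 1), d i := by
  unfold ps toB
  refine Finset.sum_nbij' (i := fun j => n - j) (j := fun i => n - i) ?_ ?_ ?_ ?_ ?_
  · intro j hj; rw [mem_range] at hj; rw [Finset.mem_Ico]; omega
  · intro i hi; rw [Finset.mem_Ico] at hi; rw [mem_range]; omega
  · intro j hj; rw [mem_range] at hj; omega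
  · intro i hi; rw [Finset.mem_Ico] at hi; omega
  · intro j hj
    rw [mem_range] at hj
    rw [if_pos (by omega : j < n)]

lemma range_split (d : ℕ → ℕ) {m : ℕ} (hm : m ≤ n + 1) :
    ∑ i ∈ range (n + 1), d i = ∑ i ∈ range m, d i + ∑ i ∈ Ico m (n + 1), d i := by
  rw [Finset.range_eq_Ico, Finset.range_eq_Ico]
  exact (Finset.sum_Ico_consecutive d (Nat.zero_le m) hm).symm

lemma prefix_le_total (d : ℕ → ℕ) {m : ℕ} (hm : m ≤ n + 1) :
    ∑ i ∈ range m, d i ≤ ∑ i ∈ range (n + 1), d i :=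
  Finset.sum_le_sum_of_subset (Finset.range_subset_range.mpr hm)

lemma d0_pos {d : ℕ → ℕ} (hn : 0 < n) (hd : IsTreeDeg n d) : 1 ≤ d 0 := by
  have := hd.2.2 1 (le_refl 1) hn
  rwa [Finset.sum_range_one] at this

lemma filter_split {d : ℕ → ℕ} (hd0 : d 0 ≠ 0) :
    ((range (n + 1)).filter fun i => d i ≠ 0)
      = insert 0 ((Ico 1 (n + 1)).filter fun i => d i ≠ 0) := by
  ext i
  rw [Finset.mem_insert, Finset.mem_filter, Finset.mem_filter, mem_range, Finset.mem_Ico]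
  constructor
  · rintro ⟨h1, h2⟩
    rcases Nat.eq_zero_or_pos i with rfl | hi
    · exact Or.inl rfl
    · exact Or.inr ⟨⟨hi, by omega⟩, h2⟩
  · rintro (rfl | ⟨h1, h2⟩)
    · exact ⟨by omega, hd0⟩
    · exact ⟨by omega, h2⟩

lemma cnt_toB {d : ℕ → ℕ} (hn : 0 < n) :
    cnt n (toB n d) = ((Ico 1 (n + 1)).filter fun i => d i ≠ 0).card := by
  unfold cnt
  refine Finset.card_nbij' (i := fun j => n - j) (j := fun i => n - i) ?_ ?_ ?_ ?_
  · intro j hj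
    rw [Finset.mem_coe, Finset.mem_filter, mem_range] at hj
    dsimp only
    rw [Finset.mem_coe, Finset.mem_filter, Finset.mem_Ico]
    obtain ⟨h1, h2⟩ := hj
    unfold toB at h2
    rw [if_pos (by omega : j < n)] at h2
    exact ⟨by omega, h2⟩
  · intro i hi
    rw [Finset.mem_coe, Finset.mem_filter, Finset.mem_Ico] at hi
    dsimp only
    rw [Finset.mem_coe, Finset.mem_filter, mem_range]
    obtain ⟨h1, h2⟩ := hi
    refine ⟨by omega, ?_⟩
    unfold toB
    rw [if_pos (by omega : n - i < n)]
    rw [show n - (n - i) = i by omega]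
    exact h2
  · intro j hj
    rw [Finset.mem_coe, Finset.mem_filter, mem_range] at hj
    dsimp only
    omega
  · intro i hi
    rw [Finset.mem_coe, Finset.mem_filter, Finset.mem_Ico] at hi
    dsimp only
    omega

lemma forward_mem {d : ℕ → ℕ} (hn : 0 < n) (hr : 1 ≤ r) (hd : DP n k r d) :
    toB n d ∈ GoodB n k r := by
  obtain ⟨⟨h1, h2, h3⟩, h4, h5⟩ := hd
  have hd0 : 1 ≤ d 0 := d0_pos hn ⟨h1, h2, h3⟩
  unfold GoodB
  rw [Finset.mem_filter, mem_BB]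
  refine ⟨⟨⟨?_, ?_⟩, ?_⟩, ?_⟩
  · intro j hj; unfold toB; rw [if_neg (by omega)]
  · intro j
    unfold toB
    by_cases h : j < n
    · rw [if_pos h]; exact h4 (n - j) (by omega) (by omega)
    · rw [if_neg h]; omega
  · -- cnt = r - 1
    rw [cnt_toB hn]
    have := filter_split (n := n) (d := d) (by omega)
    rw [this, Finset.card_insert_of_notMem (by
      rw [Finset.mem_filter, Finset.mem_Ico]; omega)] at h5
    omega
  · -- Good
    intro t ht1 ht2
    rw [sum_rev hn d ht2]
    have hq := h3 (n - t + 1) (by omega) (by omega)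
    have hsplit := range_split (n := n) d (m := n - t + 1) (by omega)
    have hle := prefix_le_total (n := n) d (m := n - t + 1) (by omega)
    omega

lemma toB_toD {b : ℕ → ℕ} (hsupp : ∀ j, n ≤ j → b j = 0) : toB n (toD n b) = b := by
  funext j
  unfold toB toD
  by_cases h : j < n
  · rw [if_pos h, if_neg (by omega : ¬ n - j = 0), if_pos (by omega : n - j ≤ n),
      show n - (n - j) = j by omega]
  · rw [if_neg h]
    exact (hsupp j (by omega)).symm

lemma backward_mem {b : ℕ → ℕ} (hn : 0 < n) (hr : 1 ≤ r) (hb : b ∈ GoodB n k r) :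
    DP n k r (toD n b) := by
  have hb' := hb
  unfold GoodB at hb'
  rw [Finset.mem_filter, mem_BB] at hb'
  obtain ⟨⟨⟨hsupp, hbnd⟩, hcnt⟩, hgood⟩ := hb'
  have hs : ps b n < n := hgood n (by omega) (le_refl n)
  have hps_mono : ∀ t, t ≤ n → ps b t ≤ ps b n := by
    intro t ht
    exact Finset.sum_le_sum_of_subset (Finset.range_subset_range.mpr ht)
  have hrev : ∀ t, t ≤ n → ps (toB n (toD n b)) t = ps b t := by
    intro t ht
    rw [toB_toD hsupp]
  have hIco : ∀ i, 1 ≤ i → i ≤ n → ∑ x ∈ Ico i (n + 1), toD n b x = ps b (n - i + 1) := by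
    intro i hi1 hi2
    rw [← hrev (n - i + 1) (by omega), sum_rev hn _ (by omega),
      show n - (n - i + 1) + 1 = i by omega]
  have hIco1 : ∑ x ∈ Ico 1 (n + 1), toD n b x = ps b n := by
    have := hIco 1 (le_refl 1) hn
    rw [show n - 1 + 1 = n by omega] at this
    exact this
  have hd0 : toD n b 0 = n - ps b n := by unfold toD; rw [if_pos rfl]
  have htot : ∑ i ∈ range (n + 1), toD n b i = n := by
    rw [range_split (n := n) (toD n b) (m := 1) (by omega), Finset.sum_range_one, hd0, hIco1]
    omega
  refine ⟨⟨?_, htot, ?_⟩, ?_, ?_⟩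
  · intro i hi
    unfold toD
    rw [if_neg (by omega), if_neg (by omega)]
  · -- dominance
    intro i hi1 hi2
    have ha := range_split (n := n) (toD n b) (m := i) (by omega)
    have hb2 := hIco i hi1 hi2
    have hg := hgood (n - i + 1) (by omega) (by omega)
    omega
  · intro i hi1 hi2
    unfold toD
    rw [if_neg (by omega), if_pos hi2]
    exact hbnd _
  · rw [filter_split (by rw [hd0]; omega)]
    rw [Finset.card_insert_of_notMem (by rw [Finset.mem_filter, Finset.mem_Ico]; omega)]
    have : ((Ico 1 (n + 1)).filter fun i => toD n b i ≠ 0).card = cnt n (toD n b |> toB n) := by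
      rw [cnt_toB hn]
    rw [this, toB_toD hsupp, hcnt]
    omega

lemma toD_toB {d : ℕ → ℕ} (hn : 0 < n) (hd : IsTreeDeg n d) : toD n (toB n d) = d := by
  obtain ⟨h1, h2, h3⟩ := hd
  have hd0 : 1 ≤ d 0 := d0_pos hn ⟨h1, h2, h3⟩
  have hps : ps (toB n d) n = ∑ i ∈ Ico 1 (n + 1), d i := by
    rw [sum_rev hn d (le_refl n), show n - n + 1 = 1 by omega]
  have hsplit := range_split (n := n) d (m := 1) (by omega)
  rw [Finset.sum_range_one] at hsplit
  funext i
  unfold toD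
  rcases Nat.eq_zero_or_pos i with rfl | hi
  · rw [if_pos rfl, hps]
    omega
  · rw [if_neg (by omega)]
    by_cases h : i ≤ n
    · rw [if_pos h]
      unfold toB
      rw [if_pos (by omega : n - i < n), show n - (n - i) = i by omega]
    · rw [if_neg h]
      exact (h1 i (by omega)).symm

lemma card_glue (hn : 0 < n) (hr : 1 ≤ r) :
    Nat.card {d : ℕ → ℕ // DP n k r d} = (GoodB n k r).card := by
  have e : {d : ℕ → ℕ // DP n k r d} ≃ {b : ℕ → ℕ // b ∈ GoodB n k r} :=
    { toFun := fun d => ⟨toB n d.1, forward_mem hn hr d.2⟩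
      invFun := fun b => ⟨toD n b.1, backward_mem hn hr b.2⟩
      left_inv := by
        rintro ⟨d, hd⟩
        exact Subtype.ext (toD_toB hn hd.1)
      right_inv := by
        rintro ⟨b, hb⟩
        refine Subtype.ext (toB_toD ?_)
        have hb' := hb
        unfold GoodB at hb'
        rw [Finset.mem_filter, mem_BB] at hb'
        exact hb'.1.1.1 }
  rw [Nat.card_congr e, Nat.card_eq_finsetCard]

lemma sum_range_ext (f : ℕ → ℤ) (a b : ℕ)
    (ha : ∀ j, a ≤ j → f j = 0) (hb : ∀ j, b ≤ j → f j = 0) :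
    ∑ j ∈ range a, f j = ∑ j ∈ range b, f j := by
  rw [Finset.sum_subset (Finset.range_subset_range.mpr (le_max_left a b))
    (fun j _ hj => ha j (by rw [Finset.mem_range] at hj; omega))]
  rw [Finset.sum_subset (Finset.range_subset_range.mpr (le_max_right a b))
    (fun j _ hj => hb j (by rw [Finset.mem_range] at hj; omega))]

end Glue

end
end RMC

/-- Refined modular Catalan number `C_{k+1,n,r}`: plane trees with `n+1` nodes,
exactly `r` internal nodes, and every non-root node of degree `< k+1`. -/
theorem refined_modular_catalan (n k r : ℕ) (hn : 1 ≤ n) (hk : 1 ≤ k) (hr : 1 ≤ r) :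
    (n : ℤ) * Nat.card {d : ℕ → ℕ // IsTreeDeg n d ∧ (∀ i, 1 ≤ i → i ≤ n → d i ≤ k) ∧
        ((Finset.range (n + 1)).filter fun i => d i ≠ 0).card = r} =
      ∑ j ∈ Finset.range ((n - r) / k + 1),
        (-1) ^ j * (n.choose (r - 1) : ℤ) * ((r - 1).choose j : ℤ) *
          ((n - j * k).choose r : ℤ) := by
  classical
  have hglue : Nat.card {d : ℕ → ℕ // IsTreeDeg n d ∧ (∀ i, 1 ≤ i → i ≤ n → d i ≤ k) ∧
      ((Finset.range (n + 1)).filter fun i => d i ≠ 0).card = r}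
      = (RMC.GoodB n k r).card := RMC.card_glue hn hr
  have hnat : n * (RMC.GoodB n k r).card = n.choose (r - 1) * (RMC.Aset n k (r - 1)).card := by
    rw [← RMC.GG_card hn, RMC.GG_card' hn, ← RMC.SS_card hn, RMC.SS_card_eq hn hr]
  have hA := RMC.Aset_card_eq (n := n) (k := k) (ρ := r - 1)
  rw [show r - 1 + 1 = r from Nat.succ_pred_eq_of_pos hr] at hA
  have hstep : (n : ℤ) * Nat.card {d : ℕ → ℕ // IsTreeDeg n d ∧ (∀ i, 1 ≤ i → i ≤ n → d i ≤ k) ∧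
      ((Finset.range (n + 1)).filter fun i => d i ≠ 0).card = r}
      = ∑ j ∈ Finset.range r, (-1) ^ j * (n.choose (r - 1) : ℤ) * ((r - 1).choose j : ℤ) *
          ((n - j * k).choose r : ℤ) := by
    rw [hglue]
    have hc : ((n * (RMC.GoodB n k r).card : ℕ) : ℤ)
        = ((n.choose (r - 1) * (RMC.Aset n k (r - 1)).card : ℕ) : ℤ) := by
      exact_mod_cast congrArg (Nat.cast (R := ℤ)) hnat
    push_cast at hc
    rw [hc, hA, Finset.mul_sum]
    refine Finset.sum_congr rfl fun j _ => ?_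
    ring
  rw [hstep]
  refine RMC.sum_range_ext _ r ((n - r) / k + 1) ?_ ?_
  · intro j hj
    clear hglue hstep
    have h0 : (r - 1).choose j = 0 := Nat.choose_eq_zero_of_lt (by omega)
    rw [h0]
    push_cast
    ring
  · intro j hj
    clear hglue hstep
    have hq := Nat.div_add_mod (n - r) k
    have hrem : (n - r) % k < k := Nat.mod_lt _ hk
    have h3 : ((n - r) / k + 1) * k ≤ j * k := Nat.mul_le_mul_right k hj
    have h4 : ((n - r) / k + 1) * k = k * ((n - r) / k) + k := by ring
    have h5 : (n - j * k).choose r = 0 := Nat.choose_eq_zero_of_lt (by omega)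
    rw [h5]
    push_cast
    ring
end

section
/- Let R be a ring with an element ω satisfying ω^k = 1. Define the binary operation a * b := ω·a + b on R, applied left-to-right. Then * is k-associative: for all x_0, x_1, ..., x_{k+1} in R, (x_0 * x_1 * ⋯ * x_k) * x_{k+1} = x_0 * (x_1 * ⋯ * x_{k+1}), where an unparenthesized product associates to the left. -/
/-- The left-to-right product `x_a * x_{a+1} * ⋯ * x_{a+m}` under the operation
`a * b := ω·a + b`, i.e. `((⋯((x_a * x_{a+1}) * x_{a+2})⋯) * x_{a+m})`. -/
def leftProd {R : Type*} [Ring R] (ω : R) (x : ℕ → R) (a : ℕ) : ℕ → R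
  | 0 => x a
  | m + 1 => ω * leftProd ω x a m + x (a + m + 1)

lemma leftProd_shift {R : Type*} [Ring R] (ω : R) (x : ℕ → R) (m : ℕ) :
    leftProd ω x 0 (m + 1) = ω ^ (m + 1) * x 0 + leftProd ω (fun i => x (i + 1)) 0 m := by
  induction m with
  | zero => simp [leftProd]
  | succ n ih =>
    show ω * leftProd ω x 0 (n + 1) + x (0 + (n + 1) + 1) =
      ω ^ (n + 1 + 1) * x 0 + (ω * leftProd ω (fun i => x (i + 1)) 0 n + x (0 + n + 1 + 1))
    rw [ih, mul_add, ← mul_assoc, ← pow_succ', add_assoc]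
    norm_num

/-- If `ω^k = 1` in a ring `R`, then `a * b := ω·a + b` is `k`-associative:
`(x_0 * x_1 * ⋯ * x_k) * x_{k+1} = x_0 * (x_1 * ⋯ * x_{k+1})`. -/
theorem k_associative {R : Type*} [Ring R] (k : ℕ) (ω : R) (hω : ω ^ k = 1)
    (x : ℕ → R) :
    ω * leftProd ω x 0 k + x (k + 1) =
      ω * x 0 + leftProd ω (fun i => x (i + 1)) 0 k := by
  cases k with
  | zero => simp [leftProd] at *
  | succ m =>
    rw [leftProd_shift]
    show _ = ω * x 0 + (ω * leftProd ω (fun i => x (i + 1)) 0 m + x (0 + m + 1 + 1))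
    rw [mul_add, ← mul_assoc, ← pow_succ', pow_succ, hω, one_mul, add_assoc]
    norm_num
end

section
/- Let ω be an element of a commutative ring with ω^k = 1, and define a * b := ω·a + b. For any parenthesization of x_0 * ⋯ * x_n corresponding to a binary tree t with left depth sequence (δ_0,...,δ_n), the value of that parenthesization equals Σ_{i=0}^{n} ω^{δ_i} · x_i. -/
/-- Binary trees (parenthesizations). -/
inductive BTree : Type
  | leaf : BTree
  | node : BTree → BTree → BTree

namespace BTree

/-- The number of leaves of a binary tree. -/
def numLeaves : BTree → ℕ
  | leaf => 1
  | node l r => numLeaves l + numLeaves r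

/-- The value of the parenthesization of `x_off * x_{off+1} * ⋯` corresponding to a
binary tree (leaves labeled left-to-right starting at `off`), where `a * b := ω·a + b`. -/
def value {R : Type*} [CommRing R] (ω : R) (x : ℕ → R) : BTree → ℕ → R
  | leaf, off => x off
  | node l r, off => ω * value ω x l off + value ω x r (off + numLeaves l)

/-- The list of left depths of the leaves (left-to-right): the left depth of a leaf is
the number of left steps on the path from the root down to it. -/
def leftDepths : BTree → List ℕ
  | leaf => [0]
  | node l r => (leftDepths l).map (· + 1) ++ leftDepths r

lemma leftDepths_length (t : BTree) : t.leftDepths.length = t.numLeaves := by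
  induction t with
  | leaf => rfl
  | node l r ihl ihr => simp [leftDepths, numLeaves, ihl, ihr]

lemma value_eq_general {R : Type*} [CommRing R] (ω : R) (x : ℕ → R) (t : BTree)
    (off : ℕ) :
    value ω x t off = ∑ i ∈ Finset.range t.numLeaves,
      ω ^ (t.leftDepths.getD i 0) * x (off + i) := by
  induction t generalizing off with
  | leaf => simp [value, numLeaves, leftDepths]
  | node l r ihl ihr =>
    rw [value, ihl, ihr]
    rw [show (node l r).numLeaves = l.numLeaves + r.numLeaves from rfl,
      Finset.sum_range_add]
    rw [Finset.mul_sum]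
    congr 1
    · apply Finset.sum_congr rfl
      intro i hi
      rw [Finset.mem_range] at hi
      have h1 : (node l r).leftDepths.getD i 0 = l.leftDepths.getD i 0 + 1 := by
        have hlen : i < l.leftDepths.length := by simp [leftDepths_length, hi]
        rw [leftDepths, List.getD_append _ _ _ _ (by simpa using hlen)]
        rw [List.getD_eq_getElem?_getD, List.getElem?_map,
          List.getD_eq_getElem?_getD, List.getElem?_eq_getElem hlen]
        rfl
      rw [h1, pow_succ, ← mul_assoc]
      ring
    · apply Finset.sum_congr rfl
      intro i hi
      have h1 : (node l r).leftDepths.getD (l.numLeaves + i) 0 = r.leftDepths.getD i 0 := by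
        rw [leftDepths, List.getD_append_right _ _ _ _
          (by simp [leftDepths_length])]
        simp [leftDepths_length]
      rw [h1]
      ring_nf

/-- For `ω` with `ω^k = 1` and `a * b := ω·a + b`, the parenthesization of
`x_0 * ⋯ * x_n` given by a binary tree `t` with left depths `(δ_0,…,δ_n)` evaluates
to `∑_i ω^{δ_i}·x_i`. -/
theorem value_eq_sum_pow_leftDepth {R : Type*} [CommRing R] (k : ℕ) (ω : R)
    (hω : ω ^ k = 1) (x : ℕ → R) (t : BTree) :
    value ω x t 0 = ∑ i ∈ Finset.range t.numLeaves, ω ^ (t.leftDepths.getD i 0) * x i := by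
  rw [value_eq_general]
  simp

end BTree
end
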